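/- arXiv:1004.1956 — 7 statements merged into one kernel-verified Lean document; each statement's English description precedes it below -/
import Mathlib

section
/- Let f be a multilinear polynomial of degree at most r in n variables, and let X = f(ε₁,…,εₙ) where ε₁,…,εₙ are independent uniform ±1 random variables. Then E[X⁴] ≤ 9^r · (E[X²])². -/
open Finset

lemma pre_map (n : ℕ) (T : Finset (Fin (n+1))) (hT : 0 ∉ T) :
    (T.preimage Fin.succ (Fin.succ_injective n).injOn).map (Fin.succEmb n) = T := by
  ext i
  simp only [Finset.mem_map, Finset.mem_preimage, Fin.coe_succEmb]
  constructor
  · rintro ⟨j, hj, rfl⟩; exact hj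
  · intro hi
    obtain ⟨j, rfl⟩ := Fin.exists_succ_eq.2 (fun h => hT (h ▸ hi))
    exact ⟨j, hi, rfl⟩

lemma map_pre (n : ℕ) (S : Finset (Fin n)) :
    (S.map (Fin.succEmb n)).preimage Fin.succ (Fin.succ_injective n).injOn = S := by
  ext j
  simp [Finset.mem_preimage, (Fin.succ_injective n).eq_iff]

lemma zero_not_mem_map (n : ℕ) (S : Finset (Fin n)) : (0 : Fin (n+1)) ∉ S.map (Fin.succEmb n) := by
  simp [Fin.succ_ne_zero]

lemma split_sum (n : ℕ) (F : Finset (Fin (n+1)) → ℝ) :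
    ∑ T : Finset (Fin (n+1)), F T
    = ∑ S : Finset (Fin n), F (S.map (Fin.succEmb n))
      + ∑ S : Finset (Fin n), F (insert 0 (S.map (Fin.succEmb n))) := by
  classical
  rw [← Finset.sum_filter_add_sum_filter_not Finset.univ (fun T => (0 : Fin (n+1)) ∉ T)]
  congr 1
  · refine Finset.sum_nbij' (i := fun (T : Finset (Fin (n+1))) => T.preimage Fin.succ (Fin.succ_injective n).injOn)
      (j := fun (S : Finset (Fin n)) => S.map (Fin.succEmb n)) ?_ ?_ ?_ ?_ ?_
    · intro T hT; simp
    · intro S hS; simpa using zero_not_mem_map n S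
    · intro T hT
      simp only [Finset.mem_filter, Finset.mem_univ, true_and] at hT
      exact pre_map n T hT
    · intro S hS; exact map_pre n S
    · intro T hT
      simp only [Finset.mem_filter, Finset.mem_univ, true_and] at hT
      rw [pre_map n T hT]
  · refine Finset.sum_nbij' (i := fun (T : Finset (Fin (n+1))) => (T.erase 0).preimage Fin.succ (Fin.succ_injective n).injOn)
      (j := fun (S : Finset (Fin n)) => insert 0 (S.map (Fin.succEmb n))) ?_ ?_ ?_ ?_ ?_
    · intro T hT; simp
    · intro S hS; simp
    · intro T hT
      simp only [Finset.mem_filter, Finset.mem_univ, true_and, not_not] at hT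
      show insert 0 (((T.erase 0).preimage Fin.succ (Fin.succ_injective n).injOn).map (Fin.succEmb n)) = T
      rw [pre_map n (T.erase 0) (Finset.notMem_erase _ _), Finset.insert_erase hT]
    · intro S hS
      show ((insert 0 (S.map (Fin.succEmb n))).erase 0).preimage Fin.succ (Fin.succ_injective n).injOn = S
      rw [Finset.erase_insert (zero_not_mem_map n S), map_pre n S]
    · intro T hT
      simp only [Finset.mem_filter, Finset.mem_univ, true_and, not_not] at hT
      show F T = F (insert 0 (((T.erase 0).preimage Fin.succ (Fin.succ_injective n).injOn).map (Fin.succEmb n)))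
      rw [pre_map n (T.erase 0) (Finset.notMem_erase _ _), Finset.insert_erase hT]

noncomputable def PS (n : ℕ) (c : Finset (Fin n) → ℝ) (x : Fin n → Bool) : ℝ :=
  ∑ S : Finset (Fin n), c S * ∏ i ∈ S, (if x i then (1:ℝ) else -1)

lemma pi_split (n : ℕ) (F : (Fin (n+1) → Bool) → ℝ) :
    ∑ x : Fin (n+1) → Bool, F x = ∑ y : Fin n → Bool, (F (Fin.cons true y) + F (Fin.cons false y)) := by
  rw [← Equiv.sum_comp (Fin.consEquiv (fun _ => Bool)) F, Fintype.sum_prod_type, Fintype.sum_bool]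
  rw [← Finset.sum_add_distrib]
  rfl

lemma poly_split (n : ℕ) (c : Finset (Fin (n+1)) → ℝ) (b : Bool) (y : Fin n → Bool) :
    PS (n+1) c (Fin.cons b y)
    = PS n (fun S => c (S.map (Fin.succEmb n))) y
      + (if b then (1:ℝ) else -1) * PS n (fun S => c (insert 0 (S.map (Fin.succEmb n)))) y := by
  unfold PS
  refine (split_sum n _).trans ?_
  rw [Finset.mul_sum]
  congr 1
  · apply Finset.sum_congr rfl
    intro S _
    rw [Finset.prod_map]
    simp [Fin.cons_succ]
  · apply Finset.sum_congr rfl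
    intro S _
    rw [Finset.prod_insert (zero_not_mem_map n S), Finset.prod_map]
    simp only [Fin.coe_succEmb, Fin.cons_succ, Fin.cons_zero]
    ring

set_option maxHeartbeats 1000000 in
lemma key : ∀ (n r : ℕ) (c : Finset (Fin n) → ℝ), (∀ S, r < S.card → c S = 0) →
    2^n * (∑ x : Fin n → Bool, (PS n c x)^4) ≤ 9^r * (∑ x : Fin n → Bool, (PS n c x)^2)^2 := by
  intro n
  induction n with
  | zero =>
    intro r c hdeg
    have h1 : ∀ x : Fin 0 → Bool, PS 0 c x = c ∅ := by
      intro x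
      unfold PS
      rw [show (Finset.univ : Finset (Finset (Fin 0))) = {∅} from rfl]
      simp
    simp only [h1]
    simp only [Finset.sum_const, Finset.card_univ]
    have h9 : (1:ℝ) ≤ 9^r := one_le_pow₀ (by norm_num)
    have := sq_nonneg ((c ∅)^2)
    simp only [Fintype.card_fun]
    norm_num
    nlinarith [sq_nonneg ((c ∅)^2)]
  | succ n ih =>
    intro r c hdeg
    set gc : Finset (Fin n) → ℝ := fun S => c (S.map (Fin.succEmb n)) with hgc
    set hc : Finset (Fin n) → ℝ := fun S => c (insert 0 (S.map (Fin.succEmb n))) with hhc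
    set G : (Fin n → Bool) → ℝ := fun y => PS n gc y with hG
    set H : (Fin n → Bool) → ℝ := fun y => PS n hc y with hH
    have hcardins : ∀ S : Finset (Fin n), (insert 0 (S.map (Fin.succEmb n))).card = S.card + 1 := by
      intro S
      rw [Finset.card_insert_of_notMem (zero_not_mem_map n S), Finset.card_map]
    have hdegG : ∀ S : Finset (Fin n), r < S.card → gc S = 0 := by
      intro S hS
      exact hdeg _ (by rwa [Finset.card_map])
    have A := ih r gc hdegG
    have E4 : (∑ x : Fin (n+1) → Bool, (PS (n+1) c x)^4)
        = 2 * (∑ y : Fin n → Bool, G y ^ 4) + 12 * (∑ y : Fin n → Bool, G y ^2 * H y ^2)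
          + 2 * (∑ y : Fin n → Bool, H y ^ 4) := by
      refine (pi_split n _).trans ?_
      rw [Finset.mul_sum, Finset.mul_sum, Finset.mul_sum, ← Finset.sum_add_distrib,
        ← Finset.sum_add_distrib]
      refine Finset.sum_congr rfl fun y _ => ?_
      rw [poly_split, poly_split]
      simp only [← hgc, ← hhc, ← hG, ← hH]
      norm_num
      ring
    have E2 : (∑ x : Fin (n+1) → Bool, (PS (n+1) c x)^2)
        = 2 * (∑ y : Fin n → Bool, G y ^ 2) + 2 * (∑ y : Fin n → Bool, H y ^ 2) := by
      refine (pi_split n _).trans ?_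
      rw [Finset.mul_sum, Finset.mul_sum, ← Finset.sum_add_distrib]
      refine Finset.sum_congr rfl fun y _ => ?_
      rw [poly_split, poly_split]
      simp only [← hgc, ← hhc, ← hG, ← hH]
      norm_num
      ring
    rw [E4, E2]
    set SG4 := ∑ y : Fin n → Bool, G y ^ 4
    set SH4 := ∑ y : Fin n → Bool, H y ^ 4
    set Sc := ∑ y : Fin n → Bool, G y ^2 * H y ^2
    set SG2 := ∑ y : Fin n → Bool, G y ^ 2
    set SH2 := ∑ y : Fin n → Bool, H y ^ 2
    have hSG2 : 0 ≤ SG2 := Finset.sum_nonneg fun y _ => sq_nonneg _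
    have hSH2 : 0 ≤ SH2 := Finset.sum_nonneg fun y _ => sq_nonneg _
    have hSc : 0 ≤ Sc := Finset.sum_nonneg fun y _ => mul_nonneg (sq_nonneg _) (sq_nonneg _)
    have h2n : (0:ℝ) < 2^n := by positivity
    obtain rfl | ⟨r', rfl⟩ : r = 0 ∨ ∃ r', r = r' + 1 := by
      cases r with
      | zero => exact Or.inl rfl
      | succ r' => exact Or.inr ⟨r', rfl⟩
    · -- r = 0 : H ≡ 0
      have hH0 : ∀ y, H y = 0 := by
        intro y
        rw [hH]
        unfold PS
        refine Finset.sum_eq_zero fun S _ => ?_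
        rw [hhc]
        simp only []
        rw [hdeg _ (by rw [hcardins]; omega), zero_mul]
      have hSH4 : SH4 = 0 := Finset.sum_eq_zero fun y _ => by rw [hH0]; ring
      have hSH2' : SH2 = 0 := Finset.sum_eq_zero fun y _ => by rw [hH0]; ring
      have hSc' : Sc = 0 := Finset.sum_eq_zero fun y _ => by rw [hH0]; ring
      rw [hSH4, hSH2', hSc']
      simp only [pow_zero] at A ⊢
      rw [pow_succ]
      nlinarith [A]
    · -- r = r' + 1
      have hdegH : ∀ S : Finset (Fin n), r' < S.card → hc S = 0 := by
        intro S hS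
        rw [hhc]
        exact hdeg _ (by rw [hcardins]; omega)
      have B := ih r' hc hdegH
      have hSG4 : 0 ≤ SG4 := Finset.sum_nonneg fun y _ => by positivity
      have hSH4 : 0 ≤ SH4 := Finset.sum_nonneg fun y _ => by positivity
      have CS := Finset.sum_mul_sq_le_sq_mul_sq Finset.univ (fun y => G y ^ 2) (fun y => H y ^ 2)
      have CS' : Sc ^ 2 ≤ SG4 * SH4 := by
        have e1 : ∀ y : Fin n → Bool, (G y ^ 2) ^ 2 = G y ^ 4 := fun y => by ring
        have e2 : ∀ y : Fin n → Bool, (H y ^ 2) ^ 2 = H y ^ 4 := fun y => by ring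
        simpa [e1, e2] using CS
      -- cross term bound
      have cross : 2^n * Sc ≤ 3^(r'+1) * 3^r' * (SG2 * SH2) := by
        have sqineq : (2^n * Sc)^2 ≤ (3^(r'+1) * 3^r' * (SG2 * SH2))^2 := by
          have lhs_eq : (2^n * Sc)^2 = (2^n : ℝ) * (2^n) * Sc^2 := by ring
          have h1 : ((2:ℝ)^n * Sc)^2 ≤ (2^n * SG4) * (2^n * SH4) := by
            rw [lhs_eq]
            calc (2^n : ℝ) * 2^n * Sc^2 ≤ 2^n * 2^n * (SG4 * SH4) := by
                  apply mul_le_mul_of_nonneg_left CS' (mul_nonneg h2n.le h2n.le)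
              _ = (2^n * SG4) * (2^n * SH4) := by ring
          have h2 : ((2:ℝ)^n * SG4) * (2^n * SH4) ≤ (9^(r'+1) * SG2^2) * (9^r' * SH2^2) := by
            exact mul_le_mul A B (mul_nonneg h2n.le hSH4)
              (mul_nonneg (pow_nonneg (by norm_num) _) (sq_nonneg _))
          calc ((2:ℝ)^n * Sc)^2 ≤ (9^(r'+1) * SG2^2) * (9^r' * SH2^2) := le_trans h1 h2
            _ = (3^(r'+1) * 3^r' * (SG2 * SH2))^2 := by
                have : (9:ℝ) = 3 * 3 := by norm_num
                rw [this, mul_pow, mul_pow]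
                ring
        have hl : (0:ℝ) ≤ 2^n * Sc := mul_nonneg h2n.le hSc
        have hr : (0:ℝ) ≤ 3^(r'+1) * 3^r' * (SG2 * SH2) :=
          mul_nonneg (mul_nonneg (pow_nonneg (by norm_num) _) (pow_nonneg (by norm_num) _))
            (mul_nonneg hSG2 hSH2)
        nlinarith [sqineq, hl, hr]
      have h9 : (9:ℝ)^(r'+1) = 9 * 9^r' := by rw [pow_succ]; ring
      have h3 : (3:ℝ)^(r'+1) * 3^r' = 3 * 9^r' := by
        rw [pow_succ, show (9:ℝ) = 3*3 by norm_num, mul_pow]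
        ring
      have h9r : (0:ℝ) ≤ 9^r' := pow_nonneg (by norm_num) _
      rw [h3] at cross
      have B' : 2^n * SH4 ≤ 9^r' * SH2^2 := B
      rw [h9] at A
      rw [h9, pow_succ]
      nlinarith [A, B', cross, sq_nonneg SH2, sq_nonneg SG2, mul_nonneg hSG2 hSH2, h2n.le,
        mul_nonneg h9r (sq_nonneg SH2)]

theorem stmt1 (n r : ℕ) (coeff : Finset (Fin n) → ℝ)
    (hdeg : ∀ S : Finset (Fin n), r < S.card → coeff S = 0) :
    let ε : (Fin n → Bool) → Fin n → ℝ := fun x i => if x i then 1 else -1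
    let f : (Fin n → ℝ) → ℝ := fun y => ∑ S : Finset (Fin n), coeff S * ∏ i ∈ S, y i
    (∑ x : Fin n → Bool, (f (ε x)) ^ 4) / 2 ^ n ≤
      9 ^ r * ((∑ x : Fin n → Bool, (f (ε x)) ^ 2) / 2 ^ n) ^ 2 := by
  intro ε f
  have hfe : ∀ x : Fin n → Bool, f (ε x) = PS n coeff x := fun x => rfl
  simp only [hfe]
  have hk := key n r coeff hdeg
  have h2n : (0:ℝ) < 2^n := by positivity
  rw [div_pow, ← mul_div_assoc, div_le_div_iff₀ h2n (by positivity)]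
  have := mul_le_mul_of_nonneg_right hk h2n.le
  nlinarith [this, h2n]
end

section
/- Let (V,𝓒) be an instance of Linear Ordering with constraint multiset 𝓒 of ordered triples of distinct variables. Associate with each constraint (u,v,w) ∈ 𝓒 the arc (u,v) in A', the arc (v,w) in A'', and the betweenness constraint (v,{u,w}) in 𝓑. Then for every linear ordering α of V: dev(V,𝓒,α) = (dev(V,A',α) + dev(V,A'',α) + dev(V,𝓑,α))/2. -/
open scoped Classical

theorem stmt6 {V : Type*} (α : V → ℝ) (hα : Function.Injective α)
    (𝓒 : Multiset (V × V × V))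
    (hd : ∀ c ∈ 𝓒, c.1 ≠ c.2.1 ∧ c.1 ≠ c.2.2 ∧ c.2.1 ≠ c.2.2) :
    let satC : V × V × V → Prop := fun c => α c.1 < α c.2.1 ∧ α c.2.1 < α c.2.2
    let satA : V × V → Prop := fun a => α a.1 < α a.2
    let satB : V × V × V → Prop := fun c =>
      (α c.2.1 < α c.1 ∧ α c.1 < α c.2.2) ∨ (α c.2.2 < α c.1 ∧ α c.1 < α c.2.1)
    let A' := 𝓒.map (fun c => (c.1, c.2.1))
    let A'' := 𝓒.map (fun c => (c.2.1, c.2.2))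
    let 𝓑 := 𝓒.map (fun c => (c.2.1, c.1, c.2.2))
    ((𝓒.filter satC).card : ℝ) - (𝓒.card : ℝ) / 6 =
      ((((A'.filter satA).card : ℝ) - (A'.card : ℝ) / 2) +
       (((A''.filter satA).card : ℝ) - (A''.card : ℝ) / 2) +
       (((𝓑.filter satB).card : ℝ) - (𝓑.card : ℝ) / 3)) / 2 := by
  intro satC satA satB A' A'' 𝓑
  have key : ∀ (s : Multiset (V × V × V)),
      (∀ c ∈ s, c.1 ≠ c.2.1 ∧ c.1 ≠ c.2.2 ∧ c.2.1 ≠ c.2.2) →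
      2 * (s.filter satC).card + s.card
        = ((s.map (fun c => (c.1, c.2.1))).filter satA).card
        + ((s.map (fun c => (c.2.1, c.2.2))).filter satA).card
        + ((s.map (fun c => (c.2.1, c.1, c.2.2))).filter satB).card := by
    intro s
    induction s using Multiset.induction_on with
    | empty => simp
    | cons c s ih =>
      intro h
      obtain ⟨h12, h13, h23⟩ := h c (by simp)
      have ih' := ih (fun x hx => h x (by simp [hx]))
      have a12 : α c.1 ≠ α c.2.1 := fun hh => h12 (hα hh)
      have a13 : α c.1 ≠ α c.2.2 := fun hh => h13 (hα hh)
      have a23 : α c.2.1 ≠ α c.2.2 := fun hh => h23 (hα hh)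
      simp only [Multiset.map_cons, Multiset.filter_cons, Multiset.card_add,
        Multiset.card_cons]
      rcases a12.lt_or_gt with h1 | h1 <;> rcases a13.lt_or_gt with h2 | h2 <;>
        rcases a23.lt_or_gt with h3 | h3 <;>
        (simp [satC, satA, satB, h1, h2, h3, h1.asymm, h2.asymm, h3.asymm] at ih' ⊢ <;> omega)
  have hk := key 𝓒 hd
  have e1 : A'.card = 𝓒.card := Multiset.card_map _ _
  have e2 : A''.card = 𝓒.card := Multiset.card_map _ _
  have e3 : 𝓑.card = 𝓒.card := Multiset.card_map _ _
  have hk' : (2 * (𝓒.filter satC).card + 𝓒.card : ℝ)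
      = ((A'.filter satA).card : ℝ) + ((A''.filter satA).card : ℝ)
        + ((𝓑.filter satB).card : ℝ) := by
    exact_mod_cast congrArg (Nat.cast : ℕ → ℝ) hk
  rw [e1, e2, e3]
  linarith
end

section
/- Let D=(V,A) be a reduced directed multigraph (no pair of mutually opposite arcs) with m arcs. For a uniformly random φ: V → {0,1,2,3}, define X = Σ_{a=(u,v)∈A} X_a where X_a = 1/2 if φ(u)<φ(v), X_a = −1/2 if φ(u)>φ(v), and X_a = 0 if φ(u)=φ(v). Then E[X²] ≥ m/32. -/
set_option maxRecDepth 100000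
set_option maxHeartbeats 1000000

section Aux

variable {V : Type*} [Fintype V] [DecidableEq V]

/-- signum function on Fin 4 -/
def sgn4 : Fin 4 → Fin 4 → ℤ := fun i j => if i < j then 1 else if j < i then -1 else 0

def gfun (a : V × V) (x : V) : ℚ := (if a.1 = x then 1 else 0) - (if a.2 = x then 1 else 0)

def pairIte (a b : V × V) : ℚ := if a.1 = b.1 ∧ a.2 = b.2 then (1:ℚ)/8 else 0

def wfun (a b : V × V) : ℚ := 5/16 * (∑ x : V, gfun a x * gfun b x) + pairIte a b

lemma indmul (c d : V) :
    ∑ x : V, (if c = x then (1:ℚ) else 0) * (if d = x then 1 else 0)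
      = if c = d then 1 else 0 := by
  have h : ∀ x : V, (if c = x then (1:ℚ) else 0) * (if d = x then 1 else 0)
      = if x = d then (if c = x then (1:ℚ) else 0) else 0 := by
    intro x
    by_cases hx : x = d
    · subst hx; simp
    · have : ¬ (d = x) := fun h' => hx h'.symm
      simp [hx, this]
  rw [Finset.sum_congr rfl (fun x _ => h x), Finset.sum_ite_eq' Finset.univ d _]
  simp

lemma sumg (a b : V × V) :
    ∑ x : V, gfun a x * gfun b x
      = (if a.1 = b.1 then (1:ℚ) else 0) + (if a.2 = b.2 then 1 else 0)
        - (if a.1 = b.2 then 1 else 0) - (if a.2 = b.1 then 1 else 0) := by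
  have h : ∀ x : V, gfun a x * gfun b x
      = (if a.1 = x then (1:ℚ) else 0) * (if b.1 = x then 1 else 0)
        - (if a.1 = x then (1:ℚ) else 0) * (if b.2 = x then 1 else 0)
        - ((if a.2 = x then (1:ℚ) else 0) * (if b.1 = x then 1 else 0)
          - (if a.2 = x then (1:ℚ) else 0) * (if b.2 = x then 1 else 0)) := by
    intro x; simp only [gfun]; ring
  rw [Finset.sum_congr rfl (fun x _ => h x)]
  rw [Finset.sum_sub_distrib, Finset.sum_sub_distrib, Finset.sum_sub_distrib]
  rw [indmul, indmul, indmul, indmul]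
  ring

lemma margGen {ι : Type*} [Fintype ι] [DecidableEq ι]
    (e : ι → V) (he : Function.Injective e) (F : (ι → Fin 4) → ℚ) :
    ∑ φ : V → Fin 4, F (fun i => φ (e i))
      = 4 ^ (Fintype.card V - Fintype.card ι) * ∑ ψ : ι → Fin 4, F ψ := by
  classical
  set p : V → Prop := fun v => ∃ i, e i = v with hp
  rw [← Equiv.sum_comp (Equiv.piEquivPiSubtypeProd p (fun _ => Fin 4)).symm
    (fun φ => F (fun i => φ (e i)))]
  have key : ∀ y : ((∀ v : {v // p v}, Fin 4) × (∀ v : {v // ¬ p v}, Fin 4)),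
      (fun i => ((Equiv.piEquivPiSubtypeProd p (fun _ => Fin 4)).symm y) (e i))
        = fun i => y.1 ⟨e i, ⟨i, rfl⟩⟩ := by
    intro y
    funext i
    simp [Equiv.piEquivPiSubtypeProd]
    exact dif_pos (⟨i, rfl⟩ : p (e i))
  simp only [key]
  rw [Fintype.sum_prod_type]
  have hbij : Function.Bijective (fun i : ι => (⟨e i, ⟨i, rfl⟩⟩ : {v // p v})) := by
    constructor
    · intro i j hij
      exact he (by simpa using hij)
    · rintro ⟨v, i, rfl⟩; exact ⟨i, rfl⟩
  let τ : ι ≃ {v // p v} := Equiv.ofBijective _ hbij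
  have hcard : Fintype.card {v // ¬ p v} = Fintype.card V - Fintype.card ι := by
    rw [Fintype.card_subtype_compl]
    congr 1
    exact (Fintype.card_congr τ).symm
  calc (∑ g : ∀ v : {v // p v}, Fin 4, ∑ _h : ∀ v : {v // ¬ p v}, Fin 4,
          F (fun i => g ⟨e i, ⟨i, rfl⟩⟩))
      = ∑ g : ∀ v : {v // p v}, Fin 4,
          (Fintype.card (∀ _v : {v // ¬ p v}, Fin 4) : ℚ) * F (fun i => g ⟨e i, ⟨i, rfl⟩⟩) := by
        simp [Finset.sum_const, nsmul_eq_mul]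
    _ = 4 ^ (Fintype.card V - Fintype.card ι) *
          ∑ g : ∀ v : {v // p v}, Fin 4, F (fun i => g ⟨e i, ⟨i, rfl⟩⟩) := by
        rw [← Finset.mul_sum]
        congr 2
        rw [Fintype.card_fun (α := {v // ¬ p v}) (β := Fin 4)]
        simp [hcard]
    _ = _ := by
        congr 1
        rw [← Equiv.sum_comp (Equiv.arrowCongr τ (Equiv.refl (Fin 4))).symm F]
        apply Finset.sum_congr rfl
        intro g _
        congr 1

lemma pow4sub (n k : ℕ) (h : k ≤ n) : (4:ℚ) ^ (n - k) = 4 ^ n / 4 ^ k := by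
  rw [eq_div_iff (by positivity), ← pow_add]
  congr 1
  omega

lemma inj2 {u v : V} (huv : u ≠ v) : Function.Injective ![u, v] := by
  intro i j hij
  fin_cases i <;> fin_cases j <;> simp_all

lemma inj3 {u v w : V} (h1 : u ≠ v) (h2 : u ≠ w) (h3 : v ≠ w) :
    Function.Injective ![u, v, w] := by
  intro i j hij
  fin_cases i <;> fin_cases j <;> simp_all

lemma inj4 {u v w z : V} (h1 : u ≠ v) (h2 : u ≠ w) (h3 : u ≠ z) (h4 : v ≠ w)
    (h5 : v ≠ z) (h6 : w ≠ z) : Function.Injective ![u, v, w, z] := by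
  intro i j hij
  fin_cases i <;> fin_cases j <;> simp_all

lemma marg2 (u v : V) (huv : u ≠ v) (f : Fin 4 → Fin 4 → ℚ) :
    ∑ φ : V → Fin 4, f (φ u) (φ v)
      = 4 ^ (Fintype.card V) / 16 * ∑ ψ : Fin 2 → Fin 4, f (ψ 0) (ψ 1) := by
  have he := inj2 huv
  have hle : 2 ≤ Fintype.card V := by
    simpa using Fintype.card_le_of_injective ![u, v] he
  have h := margGen ![u, v] he (fun ψ => f (ψ 0) (ψ 1))
  simp only [Matrix.cons_val_zero, Matrix.cons_val_one, Matrix.head_cons,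
    Fintype.card_fin] at h
  rw [h, pow4sub _ 2 hle]
  norm_num

lemma marg3 (u v w : V) (h1 : u ≠ v) (h2 : u ≠ w) (h3 : v ≠ w)
    (f : Fin 4 → Fin 4 → Fin 4 → ℚ) :
    ∑ φ : V → Fin 4, f (φ u) (φ v) (φ w)
      = 4 ^ (Fintype.card V) / 64 * ∑ ψ : Fin 3 → Fin 4, f (ψ 0) (ψ 1) (ψ 2) := by
  have he := inj3 h1 h2 h3
  have hle : 3 ≤ Fintype.card V := by
    simpa using Fintype.card_le_of_injective ![u, v, w] he
  have h := margGen ![u, v, w] he (fun ψ => f (ψ 0) (ψ 1) (ψ 2))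
  simp only [Matrix.cons_val_zero, Matrix.cons_val_one, Matrix.head_cons,
    Matrix.cons_val_two, Matrix.tail_cons, Fintype.card_fin] at h
  rw [h, pow4sub _ 3 hle]
  norm_num

lemma marg4 (u v w z : V) (h1 : u ≠ v) (h2 : u ≠ w) (h3 : u ≠ z) (h4 : v ≠ w)
    (h5 : v ≠ z) (h6 : w ≠ z) (f : Fin 4 → Fin 4 → Fin 4 → Fin 4 → ℚ) :
    ∑ φ : V → Fin 4, f (φ u) (φ v) (φ w) (φ z)
      = 4 ^ (Fintype.card V) / 256 *
          ∑ ψ : Fin 4 → Fin 4, f (ψ 0) (ψ 1) (ψ 2) (ψ 3) := by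
  have he := inj4 h1 h2 h3 h4 h5 h6
  have hle : 4 ≤ Fintype.card V := by
    simpa using Fintype.card_le_of_injective ![u, v, w, z] he
  have h := margGen ![u, v, w, z] he (fun ψ => f (ψ 0) (ψ 1) (ψ 2) (ψ 3))
  simp only [Matrix.cons_val_zero, Matrix.cons_val_one, Matrix.head_cons,
    Matrix.cons_val_two, Matrix.tail_cons, Matrix.cons_val_three,
    Fintype.card_fin] at h
  rw [h, pow4sub _ 4 hle]
  norm_num

lemma dec_par : (∑ ψ : Fin 2 → Fin 4, ((sgn4 (ψ 0) (ψ 1) : ℚ) * (sgn4 (ψ 0) (ψ 1) : ℚ))) = 12 := by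
  have h : (∑ ψ : Fin 2 → Fin 4, sgn4 (ψ 0) (ψ 1) * sgn4 (ψ 0) (ψ 1)) = 12 := by decide
  calc (∑ ψ : Fin 2 → Fin 4, ((sgn4 (ψ 0) (ψ 1) : ℚ) * (sgn4 (ψ 0) (ψ 1) : ℚ)))
      = ((∑ ψ : Fin 2 → Fin 4, sgn4 (ψ 0) (ψ 1) * sgn4 (ψ 0) (ψ 1) : ℤ) : ℚ) := by
        push_cast; rfl
    _ = 12 := by rw [h]; norm_num

lemma dec_tail : (∑ ψ : Fin 3 → Fin 4, ((sgn4 (ψ 0) (ψ 1) : ℚ) * (sgn4 (ψ 0) (ψ 2) : ℚ))) = 20 := by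
  have h : (∑ ψ : Fin 3 → Fin 4, sgn4 (ψ 0) (ψ 1) * sgn4 (ψ 0) (ψ 2)) = 20 := by decide
  calc (∑ ψ : Fin 3 → Fin 4, ((sgn4 (ψ 0) (ψ 1) : ℚ) * (sgn4 (ψ 0) (ψ 2) : ℚ)))
      = ((∑ ψ : Fin 3 → Fin 4, sgn4 (ψ 0) (ψ 1) * sgn4 (ψ 0) (ψ 2) : ℤ) : ℚ) := by
        push_cast; rfl
    _ = 20 := by rw [h]; norm_num

lemma dec_head : (∑ ψ : Fin 3 → Fin 4, ((sgn4 (ψ 0) (ψ 1) : ℚ) * (sgn4 (ψ 2) (ψ 1) : ℚ))) = 20 := by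
  have h : (∑ ψ : Fin 3 → Fin 4, sgn4 (ψ 0) (ψ 1) * sgn4 (ψ 2) (ψ 1)) = 20 := by decide
  calc (∑ ψ : Fin 3 → Fin 4, ((sgn4 (ψ 0) (ψ 1) : ℚ) * (sgn4 (ψ 2) (ψ 1) : ℚ)))
      = ((∑ ψ : Fin 3 → Fin 4, sgn4 (ψ 0) (ψ 1) * sgn4 (ψ 2) (ψ 1) : ℤ) : ℚ) := by
        push_cast; rfl
    _ = 20 := by rw [h]; norm_num

lemma dec_path1 : (∑ ψ : Fin 3 → Fin 4, ((sgn4 (ψ 0) (ψ 1) : ℚ) * (sgn4 (ψ 1) (ψ 2) : ℚ))) = -20 := by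
  have h : (∑ ψ : Fin 3 → Fin 4, sgn4 (ψ 0) (ψ 1) * sgn4 (ψ 1) (ψ 2)) = -20 := by decide
  calc (∑ ψ : Fin 3 → Fin 4, ((sgn4 (ψ 0) (ψ 1) : ℚ) * (sgn4 (ψ 1) (ψ 2) : ℚ)))
      = ((∑ ψ : Fin 3 → Fin 4, sgn4 (ψ 0) (ψ 1) * sgn4 (ψ 1) (ψ 2) : ℤ) : ℚ) := by
        push_cast; rfl
    _ = -20 := by rw [h]; norm_num

lemma dec_path2 : (∑ ψ : Fin 3 → Fin 4, ((sgn4 (ψ 0) (ψ 1) : ℚ) * (sgn4 (ψ 2) (ψ 0) : ℚ))) = -20 := by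
  have h : (∑ ψ : Fin 3 → Fin 4, sgn4 (ψ 0) (ψ 1) * sgn4 (ψ 2) (ψ 0)) = -20 := by decide
  calc (∑ ψ : Fin 3 → Fin 4, ((sgn4 (ψ 0) (ψ 1) : ℚ) * (sgn4 (ψ 2) (ψ 0) : ℚ)))
      = ((∑ ψ : Fin 3 → Fin 4, sgn4 (ψ 0) (ψ 1) * sgn4 (ψ 2) (ψ 0) : ℤ) : ℚ) := by
        push_cast; rfl
    _ = -20 := by rw [h]; norm_num

lemma dec_disj : (∑ ψ : Fin 4 → Fin 4, ((sgn4 (ψ 0) (ψ 1) : ℚ) * (sgn4 (ψ 2) (ψ 3) : ℚ))) = 0 := by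
  have h : (∑ ψ : Fin 4 → Fin 4, sgn4 (ψ 0) (ψ 1) * sgn4 (ψ 2) (ψ 3)) = 0 := by decide
  calc (∑ ψ : Fin 4 → Fin 4, ((sgn4 (ψ 0) (ψ 1) : ℚ) * (sgn4 (ψ 2) (ψ 3) : ℚ)))
      = ((∑ ψ : Fin 4 → Fin 4, sgn4 (ψ 0) (ψ 1) * sgn4 (ψ 2) (ψ 3) : ℤ) : ℚ) := by
        push_cast; rfl
    _ = 0 := by rw [h]; norm_num

lemma pairSum (u v x y : V) (ha : u ≠ v) (hb : x ≠ y) (hanti : ¬(x = v ∧ y = u)) :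
    ∑ φ : V → Fin 4, ((sgn4 (φ u) (φ v) : ℚ) * (sgn4 (φ x) (φ y) : ℚ))
      = 4 ^ (Fintype.card V) * wfun (u, v) (x, y) := by
  by_cases h11 : u = x
  · subst h11
    by_cases h22 : v = y
    · subst h22
      rw [marg2 u v ha (fun i j => ((sgn4 i j : ℚ) * (sgn4 i j : ℚ))), dec_par]
      simp only [wfun, pairIte, sumg]
      simp [ha, ha.symm, Ne.symm ha]
      ring
    · -- shared tail only: vertices u, v, y distinct
      have huy : u ≠ y := hb
      rw [marg3 u v y ha huy h22 (fun i j k => ((sgn4 i j : ℚ) * (sgn4 i k : ℚ))), dec_tail]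
      simp only [wfun, pairIte, sumg]
      simp [ha, h22, huy, Ne.symm ha]
      ring
  · by_cases h22 : v = y
    · subst h22
      -- shared head only: vertices u, v, x distinct
      have hvx : v ≠ x := fun h => hb (h.symm)
      rw [marg3 u v x ha h11 hvx (fun i j k => ((sgn4 i j : ℚ) * (sgn4 k j : ℚ))), dec_head]
      simp only [wfun, pairIte, sumg]
      simp [ha, h11, hvx, Ne.symm ha]
      ring
    · by_cases h21 : v = x
      · subst h21
        -- path u → v → y
        have hyu : y ≠ u := fun h => hanti ⟨rfl, h⟩
        rw [marg3 u v y ha (Ne.symm hyu) hb (fun i j k => ((sgn4 i j : ℚ) * (sgn4 j k : ℚ))),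
          dec_path1]
        simp only [wfun, pairIte, sumg]
        simp [ha, hb, hyu, Ne.symm hyu, h22]
        ring
      · by_cases h12 : u = y
        · subst h12
          -- path x → u → v
          have hvx : v ≠ x := fun h => h21 h
          rw [marg3 u v x ha (fun h => hb h.symm) hvx
            (fun i j k => ((sgn4 i j : ℚ) * (sgn4 k i : ℚ))), dec_path2]
          simp only [wfun, pairIte, sumg]
          simp [ha, h11, hvx, h22, Ne.symm h11]
          ring
        · -- all four distinct
          rw [marg4 u v x y ha h11 h12 (fun h => h21 h) h22 hb
            (fun i j k l => ((sgn4 i j : ℚ) * (sgn4 k l : ℚ))), dec_disj]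
          simp only [wfun, pairIte, sumg]
          simp [h11, h12, h21, h22]

lemma msum_comm {α β : Type*} (M : Multiset α) (t : Finset β) (f : α → β → ℚ) :
    ∑ x ∈ t, (M.map (fun a => f a x)).sum = (M.map (fun a => ∑ x ∈ t, f a x)).sum := by
  induction M using Multiset.induction with
  | empty => simp
  | cons a M ih => simp [Finset.sum_add_distrib, ih]

end Aux

theorem stmt12 {V : Type*} [Fintype V] [DecidableEq V]
    (A : Multiset (V × V)) (hd : ∀ a ∈ A, a.1 ≠ a.2)
    (hred : ∀ u v : V, (u, v) ∈ A → (v, u) ∉ A) :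
    let X : (V → Fin 4) → ℚ := fun φ =>
      (A.map (fun a =>
        if φ a.1 < φ a.2 then (1 : ℚ)/2 else if φ a.2 < φ a.1 then -(1/2) else 0)).sum
    ((A.card : ℚ) / 32) * 4 ^ (Fintype.card V) ≤ ∑ φ : V → Fin 4, (X φ) ^ 2 := by
  intro X
  set n := Fintype.card V with hn
  -- rewrite X in terms of sgn4
  have hX : ∀ φ : V → Fin 4,
      X φ = 1/2 * (A.map (fun a => ((sgn4 (φ a.1) (φ a.2) : ℤ) : ℚ))).sum := by
    intro φ
    rw [← Multiset.sum_map_mul_left]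
    show (A.map _).sum = (A.map _).sum
    apply congrArg Multiset.sum
    apply Multiset.map_congr rfl
    intro a _
    simp only [sgn4]
    split_ifs <;> norm_num
  have hsq : ∀ φ : V → Fin 4, (X φ)^2
      = 1/4 * (A.map (fun a =>
          (A.map (fun b => ((sgn4 (φ a.1) (φ a.2) : ℚ) * (sgn4 (φ b.1) (φ b.2) : ℚ)))).sum)).sum := by
    intro φ
    rw [hX φ]
    have expand : ((A.map (fun a => ((sgn4 (φ a.1) (φ a.2) : ℤ) : ℚ))).sum)^2
        = (A.map (fun a =>
            (A.map (fun b => ((sgn4 (φ a.1) (φ a.2) : ℚ) * (sgn4 (φ b.1) (φ b.2) : ℚ)))).sum)).sum := by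
      rw [sq, ← Multiset.sum_map_mul_right]
      apply congrArg Multiset.sum
      apply Multiset.map_congr rfl
      intro a _
      rw [← Multiset.sum_map_mul_left]
    rw [mul_pow, expand]
    norm_num
  -- total sum
  have htot : ∑ φ : V → Fin 4, (X φ)^2
      = 1/4 * (A.map (fun a => (A.map (fun b =>
          ∑ φ : V → Fin 4, ((sgn4 (φ a.1) (φ a.2) : ℚ) * (sgn4 (φ b.1) (φ b.2) : ℚ)))).sum)).sum := by
    rw [Finset.sum_congr rfl (fun φ _ => hsq φ), ← Finset.mul_sum]
    congr 1
    rw [msum_comm]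
    apply congrArg Multiset.sum
    apply Multiset.map_congr rfl
    intro a _
    rw [msum_comm]
  -- evaluate each pair
  have hpair : ∀ a ∈ A, ∀ b ∈ A,
      ∑ φ : V → Fin 4, ((sgn4 (φ a.1) (φ a.2) : ℚ) * (sgn4 (φ b.1) (φ b.2) : ℚ))
        = 4 ^ n * wfun a b := by
    intro a haA b hbA
    have hb' : (a.2, a.1) ∉ A := hred a.1 a.2 (by simpa using haA)
    have hanti : ¬(b.1 = a.2 ∧ b.2 = a.1) := by
      rintro ⟨h1, h2⟩
      exact hb' (by rwa [← h1, ← h2, Prod.mk.eta])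
    have := pairSum a.1 a.2 b.1 b.2 (hd a haA) (hd b hbA) hanti
    simpa using this
  have htot2 : ∑ φ : V → Fin 4, (X φ)^2
      = 1/4 * (4 ^ n * (A.map (fun a => (A.map (fun b => wfun a b)).sum)).sum) := by
    rw [htot]
    congr 1
    rw [← Multiset.sum_map_mul_left]
    apply congrArg Multiset.sum
    apply Multiset.map_congr rfl
    intro a haA
    rw [← Multiset.sum_map_mul_left]
    apply congrArg Multiset.sum
    exact Multiset.map_congr rfl (fun b hbA => hpair a haA b hbA)
  -- split W into the quadratic part and the diagonal part
  have hWsplit : (A.map (fun a => (A.map (fun b => wfun a b)).sum)).sum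
      = (A.map (fun a => (A.map (fun b => 5/16 * (∑ x : V, gfun a x * gfun b x))).sum)).sum
        + (A.map (fun a => (A.map (fun b => pairIte a b)).sum)).sum := by
    rw [← Multiset.sum_map_add]
    apply congrArg Multiset.sum
    apply Multiset.map_congr rfl
    intro a _
    rw [← Multiset.sum_map_add]
    apply congrArg Multiset.sum
    exact Multiset.map_congr rfl (fun b _ => rfl)
  -- the quadratic part is a sum of squares
  have hW1 : (A.map (fun a => (A.map (fun b => 5/16 * (∑ x : V, gfun a x * gfun b x))).sum)).sum
      = 5/16 * ∑ x : V, ((A.map (fun a => gfun a x)).sum) * ((A.map (fun a => gfun a x)).sum) := by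
    have inner : ∀ a : V × V,
        (A.map (fun b => 5/16 * (∑ x : V, gfun a x * gfun b x))).sum
          = 5/16 * (∑ x : V, gfun a x * ((A.map (fun b => gfun b x)).sum)) := by
      intro a
      rw [Multiset.sum_map_mul_left]
      congr 1
      rw [← msum_comm]
      apply Finset.sum_congr rfl
      intro x _
      exact Multiset.sum_map_mul_left
    calc (A.map (fun a => (A.map (fun b => 5/16 * (∑ x : V, gfun a x * gfun b x))).sum)).sum
        = (A.map (fun a => 5/16 * (∑ x : V, gfun a x * ((A.map (fun b => gfun b x)).sum)))).sum := by
          exact congrArg Multiset.sum (Multiset.map_congr rfl (fun a _ => inner a))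
      _ = 5/16 * (A.map (fun a => ∑ x : V, gfun a x * ((A.map (fun b => gfun b x)).sum))).sum := by
          rw [Multiset.sum_map_mul_left]
      _ = 5/16 * ∑ x : V, (A.map (fun a => gfun a x * ((A.map (fun b => gfun b x)).sum))).sum := by
          rw [← msum_comm]
      _ = 5/16 * ∑ x : V, ((A.map (fun a => gfun a x)).sum) * ((A.map (fun a => gfun a x)).sum) := by
          congr 1
          apply Finset.sum_congr rfl
          intro x _
          exact Multiset.sum_map_mul_right
  have hW1nonneg : 0 ≤ (A.map (fun a =>
      (A.map (fun b => 5/16 * (∑ x : V, gfun a x * gfun b x))).sum)).sum := by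
    rw [hW1]
    apply mul_nonneg (by norm_num)
    apply Finset.sum_nonneg
    intro x _
    exact mul_self_nonneg _
  -- the diagonal part is at least card/8
  have hW2 : (A.card : ℚ) * (1/8)
      ≤ (A.map (fun a => (A.map (fun b => pairIte a b)).sum)).sum := by
    have hconst : (A.map (fun _ : V × V => (1:ℚ)/8)).sum = (A.card : ℚ) * (1/8) := by
      rw [Multiset.map_const', Multiset.sum_replicate, nsmul_eq_mul]
    rw [← hconst]
    apply Multiset.sum_map_le_sum_map
    intro a haA
    have hnonneg : ∀ q ∈ A.map (fun b => pairIte a b), 0 ≤ q := by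
      intro q hq
      obtain ⟨b, _, rfl⟩ := Multiset.mem_map.1 hq
      unfold pairIte
      split <;> norm_num
    have hmem : (1/8 : ℚ) ∈ A.map (fun b => pairIte a b) :=
      Multiset.mem_map.2 ⟨a, haA, by simp [pairIte]⟩
    exact Multiset.single_le_sum hnonneg _ hmem
  -- put everything together
  have hW : (A.card : ℚ) * (1/8)
      ≤ (A.map (fun a => (A.map (fun b => wfun a b)).sum)).sum := by
    rw [hWsplit]
    linarith
  rw [htot2]
  have hp4 : (0:ℚ) < 4 ^ n := by positivity
  calc ((A.card : ℚ) / 32) * 4 ^ n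
      = 1/4 * (4 ^ n * ((A.card : ℚ) * (1/8))) := by ring
    _ ≤ 1/4 * (4 ^ n * (A.map (fun a => (A.map (fun b => wfun a b)).sum)).sum) := by
        have := mul_le_mul_of_nonneg_left hW (le_of_lt hp4)
        linarith
end

section
/- Let (V,𝓑) be a reduced instance of Betweenness (no complete 3-sets of constraints) with m constraints. For a uniformly random φ: V → {0,1,2,3}, define Y = Σ_{B∈𝓑} Y_B, where for B=(v,{u,w}): Y_B = 0 if φ(u)=φ(v)=φ(w); Y_B = −1/3 if φ(v)≠φ(u)=φ(w); Y_B = 1/6 if φ(v) equals exactly one of φ(u),φ(w); Y_B = 2/3 if φ(u),φ(v),φ(w) are distinct with φ(v) strictly between φ(u) and φ(w); and Y_B = −1/3 if φ(u),φ(v),φ(w) are distinct with φ(v) not between φ(u) and φ(w). Then E[Y²] ≥ 11m/768. -/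
def F3 : Fin 4 → Fin 4 → Fin 4 → ℤ :=
  ![ ![ ![ 0, 20, -4, -16], ![ -40, -4, 28, 16], ![ 8, -20, -4, 16], ![ 32, 4, -20, -16]],
     ![ ![ 20, 8, -8, -20], ![ -4, 0, 8, -4], ![ -20, -16, 8, 28], ![ 4, 8, -8, -4]],
     ![ ![ -4, -8, 8, 4], ![ 28, 8, -16, -20], ![ -4, 8, 0, -4], ![ -20, -8, 8, 20]],
     ![ ![ -16, -20, 4, 32], ![ 16, -4, -20, 8], ![ 16, 28, -4, -40], ![ -16, -4, 20, 0]]]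

def Aq : Fin 4 → Fin 4 → ℤ :=
  ![ ![ 24, 16, -8, -8],
     ![ -8, 0, -8, -8],
     ![ -8, -8, 0, -8],
     ![ -8, -8, 16, 24]]

def Bq : Fin 4 → Fin 4 → ℤ :=
  ![ ![ -30, -14, 10, 34],
     ![ -2, -18, -2, 22],
     ![ 22, -2, -18, -2],
     ![ 34, 10, -14, -30]]

def Cq : Fin 4 → Fin 4 → ℤ :=
  ![ ![ 6, -14, -14, -26],
     ![ 22, 18, 10, -2],
     ![ -2, 10, 18, 22],
     ![ -26, -14, -14, 6]]

def Yi : Fin 4 → Fin 4 → Fin 4 → ℤ := fun a b d =>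
  if a = b ∧ b = d then 0
  else if a = d then -32
  else if b = a ∨ b = d then 16
  else if (a < b ∧ b < d) ∨ (d < b ∧ b < a) then 64 else -32

lemma decompZ : ∀ a b d : Fin 4, Yi a b d = F3 a b d + Aq a b + Bq a d + Cq b d := by decide
lemma Fz1 : ∀ b d : Fin 4, ∑ a : Fin 4, F3 a b d = 0 := by decide
lemma Fz2 : ∀ a d : Fin 4, ∑ b : Fin 4, F3 a b d = 0 := by decide
lemma Fz3 : ∀ a b : Fin 4, ∑ d : Fin 4, F3 a b d = 0 := by decide
lemma SsqZ : ∑ a : Fin 4, ∑ b : Fin 4, ∑ d : Fin 4, F3 a b d * F3 a b d = 16896 := by decide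
lemma Ssq2Z : ∑ a : Fin 4, ∑ b : Fin 4, ∑ d : Fin 4, F3 a b d * F3 d b a = 16896 := by decide
lemma Sc1Z : ∑ a : Fin 4, ∑ b : Fin 4, ∑ d : Fin 4, F3 a b d * F3 b a d = -8448 := by decide
lemma Sc2Z : ∑ a : Fin 4, ∑ b : Fin 4, ∑ d : Fin 4, F3 a b d * F3 d a b = -8448 := by decide
lemma Sc3Z : ∑ a : Fin 4, ∑ b : Fin 4, ∑ d : Fin 4, F3 a b d * F3 a d b = -8448 := by decide
lemma Sc4Z : ∑ a : Fin 4, ∑ b : Fin 4, ∑ d : Fin 4, F3 a b d * F3 b d a = -8448 := by decide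

lemma bridge (a b d : Fin 4) :
    96 * (if a = b ∧ b = d then (0:ℚ)
      else if a = d then -(1/3)
      else if b = a ∨ b = d then 1/6
      else if (a < b ∧ b < d) ∨ (d < b ∧ b < a) then 2/3 else -(1/3))
    = ((Yi a b d : ℤ) : ℚ) := by
  unfold Yi
  split_ifs <;> norm_num

-- ℚ-cast versions of the triple sums
lemma SsqQ : ∑ a : Fin 4, ∑ b : Fin 4, ∑ d : Fin 4,
    ((F3 a b d : ℤ):ℚ) * ((F3 a b d : ℤ):ℚ) = 16896 := by exact_mod_cast SsqZ
lemma Ssq2Q : ∑ a : Fin 4, ∑ b : Fin 4, ∑ d : Fin 4,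
    ((F3 a b d : ℤ):ℚ) * ((F3 d b a : ℤ):ℚ) = 16896 := by exact_mod_cast Ssq2Z
lemma Sc1Q : ∑ a : Fin 4, ∑ b : Fin 4, ∑ d : Fin 4,
    ((F3 a b d : ℤ):ℚ) * ((F3 b a d : ℤ):ℚ) = -8448 := by exact_mod_cast Sc1Z
lemma Sc2Q : ∑ a : Fin 4, ∑ b : Fin 4, ∑ d : Fin 4,
    ((F3 a b d : ℤ):ℚ) * ((F3 d a b : ℤ):ℚ) = -8448 := by exact_mod_cast Sc2Z
lemma Sc3Q : ∑ a : Fin 4, ∑ b : Fin 4, ∑ d : Fin 4,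
    ((F3 a b d : ℤ):ℚ) * ((F3 a d b : ℤ):ℚ) = -8448 := by exact_mod_cast Sc3Z
lemma Sc4Q : ∑ a : Fin 4, ∑ b : Fin 4, ∑ d : Fin 4,
    ((F3 a b d : ℤ):ℚ) * ((F3 b d a : ℤ):ℚ) = -8448 := by exact_mod_cast Sc4Z

section Main

variable {V : Type*} [Fintype V] [DecidableEq V]

/-- degree-3 component of a constraint, as a function of the assignment -/
def fB (φ : V → Fin 4) (c : V × V × V) : ℚ := ((F3 (φ c.2.1) (φ c.1) (φ c.2.2) : ℤ) : ℚ)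

/-- lower-degree component of a constraint -/
def lB (φ : V → Fin 4) (c : V × V × V) : ℚ :=
  ((Aq (φ c.2.1) (φ c.1) : ℤ) : ℚ) + ((Bq (φ c.2.1) (φ c.2.2) : ℤ) : ℚ)
    + ((Cq (φ c.1) (φ c.2.2) : ℤ) : ℚ)

def keyF (c : V × V × V) : Finset V := {c.1, c.2.1, c.2.2}

set_option maxHeartbeats 800000 in
lemma sumA (z : V) (H : (V → Fin 4) → ℚ) :
    ∑ φ : V → Fin 4, ∑ t : Fin 4, H (Function.update φ z t)
      = 4 * ∑ φ : V → Fin 4, H φ := by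
  classical
  have hinv : Function.Involutive
      (fun p : (V → Fin 4) × Fin 4 => (Function.update p.1 z p.2, p.1 z)) := by
    rintro ⟨φ, t⟩
    simp [Function.update_idem, Function.update_eq_self]
  have key := Fintype.sum_bijective _ hinv.bijective
      (fun p : (V → Fin 4) × Fin 4 => H (Function.update p.1 z p.2))
      (fun p : (V → Fin 4) × Fin 4 => H p.1) (fun p => rfl)
  calc ∑ φ : V → Fin 4, ∑ t : Fin 4, H (Function.update φ z t)
      = ∑ p : (V → Fin 4) × Fin 4, H (Function.update p.1 z p.2) :=
        (Fintype.sum_prod_type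
          (fun p : (V → Fin 4) × Fin 4 => H (Function.update p.1 z p.2))).symm
    _ = ∑ p : (V → Fin 4) × Fin 4, H p.1 := key
    _ = ∑ φ : V → Fin 4, ∑ _t : Fin 4, H φ :=
        Fintype.sum_prod_type (fun p : (V → Fin 4) × Fin 4 => H p.1)
    _ = 4 * ∑ φ : V → Fin 4, H φ := by
        rw [Finset.mul_sum]
        refine Finset.sum_congr rfl fun φ _ => ?_
        simp

lemma sumA0 (z : V) (H : (V → Fin 4) → ℚ)
    (h0 : ∀ φ : V → Fin 4, ∑ t : Fin 4, H (Function.update φ z t) = 0) :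
    ∑ φ : V → Fin 4, H φ = 0 := by
  have h := sumA z H
  have h2 : ∑ φ : V → Fin 4, ∑ t : Fin 4, H (Function.update φ z t) = 0 :=
    Finset.sum_eq_zero fun φ _ => h0 φ
  rw [h2] at h
  linarith

lemma sumB (u v w : V) (huv : u ≠ v) (huw : u ≠ w) (hvw : v ≠ w)
    (G : Fin 4 → Fin 4 → Fin 4 → ℚ) :
    64 * ∑ φ : V → Fin 4, G (φ u) (φ v) (φ w)
      = (4:ℚ) ^ (Fintype.card V) * ∑ a : Fin 4, ∑ b : Fin 4, ∑ d : Fin 4, G a b d := by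
  classical
  have h1 : ∑ φ : V → Fin 4, ∑ t : Fin 4, G (φ u) (φ v) t
      = 4 * ∑ φ : V → Fin 4, G (φ u) (φ v) (φ w) := by
    have h := sumA w (fun φ => G (φ u) (φ v) (φ w))
    rw [← h]
    refine Finset.sum_congr rfl fun φ _ => Finset.sum_congr rfl fun t _ => ?_
    rw [Function.update_of_ne huw t φ, Function.update_of_ne hvw t φ, Function.update_self]
  have h2 : ∑ φ : V → Fin 4, ∑ b : Fin 4, ∑ t : Fin 4, G (φ u) b t
      = 4 * ∑ φ : V → Fin 4, ∑ t : Fin 4, G (φ u) (φ v) t := by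
    have h := sumA v (fun φ => ∑ t : Fin 4, G (φ u) (φ v) t)
    rw [← h]
    refine Finset.sum_congr rfl fun φ _ => Finset.sum_congr rfl fun b _ =>
      Finset.sum_congr rfl fun t _ => ?_
    rw [Function.update_of_ne huv b φ, Function.update_self]
  have h3 : ∑ φ : V → Fin 4, ∑ a : Fin 4, ∑ b : Fin 4, ∑ t : Fin 4, G a b t
      = 4 * ∑ φ : V → Fin 4, ∑ b : Fin 4, ∑ t : Fin 4, G (φ u) b t := by
    have h := sumA u (fun φ => ∑ b : Fin 4, ∑ t : Fin 4, G (φ u) b t)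
    rw [← h]
    refine Finset.sum_congr rfl fun φ _ => Finset.sum_congr rfl fun a _ =>
      Finset.sum_congr rfl fun b _ => Finset.sum_congr rfl fun t _ => ?_
    rw [Function.update_self]
  have h4 : ∑ φ : V → Fin 4, (∑ a : Fin 4, ∑ b : Fin 4, ∑ t : Fin 4, G a b t)
      = (4:ℚ) ^ (Fintype.card V) * ∑ a : Fin 4, ∑ b : Fin 4, ∑ t : Fin 4, G a b t := by
    rw [Finset.sum_const, Finset.card_univ, Fintype.card_fun, Fintype.card_fin, nsmul_eq_mul]
    push_cast
    ring
  linarith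

lemma masterV (c1 c2 c3 : V) (h12 : c1 ≠ c2) (h13 : c1 ≠ c3) (h23 : c2 ≠ c3)
    (z : V) (hz : z = c1 ∨ z = c2 ∨ z = c3)
    (g : (V → Fin 4) → ℚ) (hg : ∀ (φ : V → Fin 4) (t : Fin 4), g (Function.update φ z t) = g φ) :
    ∑ φ : V → Fin 4, ((F3 (φ c2) (φ c1) (φ c3) : ℤ) : ℚ) * g φ = 0 := by
  apply sumA0 z (fun φ => ((F3 (φ c2) (φ c1) (φ c3) : ℤ) : ℚ) * g φ)
  intro φ
  rcases hz with rfl | rfl | rfl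
  · -- z = c1
    have e : ∀ t : Fin 4,
        ((F3 (Function.update φ z t c2) (Function.update φ z t z)
            (Function.update φ z t c3) : ℤ) : ℚ) * g (Function.update φ z t)
        = ((F3 (φ c2) t (φ c3) : ℤ) : ℚ) * g φ := by
      intro t
      rw [Function.update_of_ne (Ne.symm h12) t φ, Function.update_of_ne (Ne.symm h13) t φ,
        Function.update_self, hg]
    calc ∑ t : Fin 4, ((F3 (Function.update φ z t c2) (Function.update φ z t z)
            (Function.update φ z t c3) : ℤ) : ℚ) * g (Function.update φ z t)
        = ∑ t : Fin 4, ((F3 (φ c2) t (φ c3) : ℤ) : ℚ) * g φ :=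
          Finset.sum_congr rfl fun t _ => e t
      _ = (∑ t : Fin 4, ((F3 (φ c2) t (φ c3) : ℤ) : ℚ)) * g φ := (Finset.sum_mul _ _ _).symm
      _ = 0 := by
          have hzz : (∑ t : Fin 4, ((F3 (φ c2) t (φ c3) : ℤ) : ℚ)) = 0 := by
            exact_mod_cast Fz2 (φ c2) (φ c3)
          rw [hzz, zero_mul]
  · -- z = c2
    have e : ∀ t : Fin 4,
        ((F3 (Function.update φ z t z) (Function.update φ z t c1)
            (Function.update φ z t c3) : ℤ) : ℚ) * g (Function.update φ z t)
        = ((F3 t (φ c1) (φ c3) : ℤ) : ℚ) * g φ := by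
      intro t
      rw [Function.update_of_ne h12 t φ, Function.update_of_ne (Ne.symm h23) t φ,
        Function.update_self, hg]
    calc ∑ t : Fin 4, ((F3 (Function.update φ z t z) (Function.update φ z t c1)
            (Function.update φ z t c3) : ℤ) : ℚ) * g (Function.update φ z t)
        = ∑ t : Fin 4, ((F3 t (φ c1) (φ c3) : ℤ) : ℚ) * g φ :=
          Finset.sum_congr rfl fun t _ => e t
      _ = (∑ t : Fin 4, ((F3 t (φ c1) (φ c3) : ℤ) : ℚ)) * g φ := (Finset.sum_mul _ _ _).symm
      _ = 0 := by
          have hzz : (∑ t : Fin 4, ((F3 t (φ c1) (φ c3) : ℤ) : ℚ)) = 0 := by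
            exact_mod_cast Fz1 (φ c1) (φ c3)
          rw [hzz, zero_mul]
  · -- z = c3
    have e : ∀ t : Fin 4,
        ((F3 (Function.update φ z t c2) (Function.update φ z t c1)
            (Function.update φ z t z) : ℤ) : ℚ) * g (Function.update φ z t)
        = ((F3 (φ c2) (φ c1) t : ℤ) : ℚ) * g φ := by
      intro t
      rw [Function.update_of_ne h13 t φ, Function.update_of_ne h23 t φ,
        Function.update_self, hg]
    calc ∑ t : Fin 4, ((F3 (Function.update φ z t c2) (Function.update φ z t c1)
            (Function.update φ z t z) : ℤ) : ℚ) * g (Function.update φ z t)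
        = ∑ t : Fin 4, ((F3 (φ c2) (φ c1) t : ℤ) : ℚ) * g φ :=
          Finset.sum_congr rfl fun t _ => e t
      _ = (∑ t : Fin 4, ((F3 (φ c2) (φ c1) t : ℤ) : ℚ)) * g φ := (Finset.sum_mul _ _ _).symm
      _ = 0 := by
          have hzz : (∑ t : Fin 4, ((F3 (φ c2) (φ c1) t : ℤ) : ℚ)) = 0 := by
            exact_mod_cast Fz3 (φ c2) (φ c1)
          rw [hzz, zero_mul]

lemma pick (a b c x y : V) (hab : a ≠ b) (hac : a ≠ c) (hbc : b ≠ c) :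
    ∃ z, (z = a ∨ z = b ∨ z = c) ∧ z ≠ x ∧ z ≠ y := by
  by_cases h1 : a ≠ x ∧ a ≠ y
  · exact ⟨a, Or.inl rfl, h1.1, h1.2⟩
  by_cases h2 : b ≠ x ∧ b ≠ y
  · exact ⟨b, Or.inr (Or.inl rfl), h2.1, h2.2⟩
  rw [not_and_or, not_not, not_not] at h1 h2
  refine ⟨c, Or.inr (Or.inr rfl), fun hcx => ?_, fun hcy => ?_⟩ <;>
    rcases h1 with rfl | rfl <;> rcases h2 with rfl | rfl <;> simp_all

lemma key_cases {x y z u v w : V} (hxy : x ≠ y) (hxz : x ≠ z) (hyz : y ≠ z)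
    (h : ({x, y, z} : Finset V) = {u, v, w}) :
    (x = u ∧ y = v ∧ z = w) ∨ (x = u ∧ y = w ∧ z = v) ∨ (x = v ∧ y = u ∧ z = w) ∨
    (x = v ∧ y = w ∧ z = u) ∨ (x = w ∧ y = u ∧ z = v) ∨ (x = w ∧ y = v ∧ z = u) := by
  have hx : x = u ∨ x = v ∨ x = w := by
    have : x ∈ ({u, v, w} : Finset V) := h ▸ (by simp)
    simpa using this
  have hy : y = u ∨ y = v ∨ y = w := by
    have : y ∈ ({u, v, w} : Finset V) := h ▸ (by simp)
    simpa using this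
  have hz : z = u ∨ z = v ∨ z = w := by
    have : z ∈ ({u, v, w} : Finset V) := h ▸ (by simp)
    simpa using this
  rcases hx with rfl | rfl | rfl <;> rcases hy with rfl | rfl | rfl <;>
    rcases hz with rfl | rfl | rfl <;> simp_all

lemma mem_perm (c c' : V × V × V)
    (h1' : c'.1 ≠ c'.2.1) (h2' : c'.1 ≠ c'.2.2) (h3' : c'.2.1 ≠ c'.2.2)
    (hkey : keyF c' = keyF c) :
    c' = (c.1, c.2.1, c.2.2) ∨ c' = (c.1, c.2.2, c.2.1) ∨ c' = (c.2.1, c.1, c.2.2) ∨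
    c' = (c.2.1, c.2.2, c.1) ∨ c' = (c.2.2, c.1, c.2.1) ∨ c' = (c.2.2, c.2.1, c.1) := by
  unfold keyF at hkey
  have hc := key_cases h1' h2' h3' hkey
  rcases hc with ⟨e1,e2,e3⟩|⟨e1,e2,e3⟩|⟨e1,e2,e3⟩|⟨e1,e2,e3⟩|⟨e1,e2,e3⟩|⟨e1,e2,e3⟩
  · exact Or.inl (by rw [← e1, ← e2, ← e3])
  · exact Or.inr (Or.inl (by rw [← e1, ← e2, ← e3]))
  · exact Or.inr (Or.inr (Or.inl (by rw [← e1, ← e2, ← e3])))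
  · exact Or.inr (Or.inr (Or.inr (Or.inl (by rw [← e1, ← e2, ← e3]))))
  · exact Or.inr (Or.inr (Or.inr (Or.inr (Or.inl (by rw [← e1, ← e2, ← e3])))))
  · exact Or.inr (Or.inr (Or.inr (Or.inr (Or.inr (by rw [← e1, ← e2, ← e3])))))

lemma pairT (c c' : V × V × V)
    (h1 : c.1 ≠ c.2.1) (h2 : c.1 ≠ c.2.2) (h3 : c.2.1 ≠ c.2.2)
    (h1' : c'.1 ≠ c'.2.1) (h2' : c'.1 ≠ c'.2.2) (h3' : c'.2.1 ≠ c'.2.2)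
    (hkey : keyF c' = keyF c) :
    64 * ∑ φ : V → Fin 4, fB φ c * fB φ c'
      = (4:ℚ) ^ (Fintype.card V) * (if c.1 = c'.1 then 16896 else -8448) := by
  have hp := mem_perm c c' h1' h2' h3' hkey
  obtain ⟨v, u, w⟩ := c
  dsimp only at h1 h2 h3 hp ⊢
  rcases hp with rfl | rfl | rfl | rfl | rfl | rfl
  · rw [if_pos rfl]
    have hs := sumB u v w (Ne.symm h1) h3 h2
      (fun a b d => ((F3 a b d : ℤ) : ℚ) * ((F3 a b d : ℤ) : ℚ))
    try simp only [] at hs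
    unfold fB
    dsimp only
    rw [hs, SsqQ]
  · rw [if_pos rfl]
    have hs := sumB u v w (Ne.symm h1) h3 h2
      (fun a b d => ((F3 a b d : ℤ) : ℚ) * ((F3 d b a : ℤ) : ℚ))
    try simp only [] at hs
    unfold fB
    dsimp only
    rw [hs, Ssq2Q]
  · rw [if_neg h1]
    have hs := sumB u v w (Ne.symm h1) h3 h2
      (fun a b d => ((F3 a b d : ℤ) : ℚ) * ((F3 b a d : ℤ) : ℚ))
    try simp only [] at hs
    unfold fB
    dsimp only
    rw [hs, Sc1Q]
  · rw [if_neg h1]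
    have hs := sumB u v w (Ne.symm h1) h3 h2
      (fun a b d => ((F3 a b d : ℤ) : ℚ) * ((F3 d a b : ℤ) : ℚ))
    try simp only [] at hs
    unfold fB
    dsimp only
    rw [hs, Sc2Q]
  · rw [if_neg h2]
    have hs := sumB u v w (Ne.symm h1) h3 h2
      (fun a b d => ((F3 a b d : ℤ) : ℚ) * ((F3 b d a : ℤ) : ℚ))
    try simp only [] at hs
    unfold fB
    dsimp only
    rw [hs, Sc4Q]
  · rw [if_neg h2]
    have hs := sumB u v w (Ne.symm h1) h3 h2
      (fun a b d => ((F3 a b d : ℤ) : ℚ) * ((F3 a d b : ℤ) : ℚ))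
    try simp only [] at hs
    unfold fB
    dsimp only
    rw [hs, Sc3Q]

lemma crossKey (c c' : V × V × V)
    (h1 : c.1 ≠ c.2.1) (h2 : c.1 ≠ c.2.2) (h3 : c.2.1 ≠ c.2.2)
    (h1' : c'.1 ≠ c'.2.1) (h2' : c'.1 ≠ c'.2.2) (h3' : c'.2.1 ≠ c'.2.2)
    (hkey : keyF c ≠ keyF c') :
    ∑ φ : V → Fin 4, fB φ c * fB φ c' = 0 := by
  classical
  by_cases hsub : keyF c ⊆ keyF c'
  · -- then there is z ∈ keyF c' \ keyF c
    have hns : ¬ keyF c' ⊆ keyF c := fun h => hkey (Finset.Subset.antisymm hsub h)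
    obtain ⟨z, hzmem, hznot⟩ := Finset.not_subset.mp hns
    have hz : z = c'.1 ∨ z = c'.2.1 ∨ z = c'.2.2 := by
      unfold keyF at hzmem; simpa using hzmem
    have hz1 : z ≠ c.1 := fun h => hznot (by unfold keyF; simp [h])
    have hz2 : z ≠ c.2.1 := fun h => hznot (by unfold keyF; simp [h])
    have hz3 : z ≠ c.2.2 := fun h => hznot (by unfold keyF; simp [h])
    have hswap : ∀ φ : V → Fin 4, fB φ c * fB φ c' = fB φ c' * fB φ c :=
      fun φ => mul_comm _ _
    rw [Finset.sum_congr rfl fun φ _ => hswap φ]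
    apply masterV c'.1 c'.2.1 c'.2.2 h1' h2' h3' z hz (fun φ => fB φ c)
    intro φ t
    unfold fB
    rw [Function.update_of_ne (Ne.symm hz2) t φ, Function.update_of_ne (Ne.symm hz1) t φ,
      Function.update_of_ne (Ne.symm hz3) t φ]
  · obtain ⟨z, hzmem, hznot⟩ := Finset.not_subset.mp hsub
    have hz : z = c.1 ∨ z = c.2.1 ∨ z = c.2.2 := by
      unfold keyF at hzmem; simpa using hzmem
    have hz1 : z ≠ c'.1 := fun h => hznot (by unfold keyF; simp [h])
    have hz2 : z ≠ c'.2.1 := fun h => hznot (by unfold keyF; simp [h])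
    have hz3 : z ≠ c'.2.2 := fun h => hznot (by unfold keyF; simp [h])
    apply masterV c.1 c.2.1 c.2.2 h1 h2 h3 z hz (fun φ => fB φ c')
    intro φ t
    unfold fB
    rw [Function.update_of_ne (Ne.symm hz2) t φ, Function.update_of_ne (Ne.symm hz1) t φ,
      Function.update_of_ne (Ne.symm hz3) t φ]

lemma vanish2 (c : V × V × V)
    (h1 : c.1 ≠ c.2.1) (h2 : c.1 ≠ c.2.2) (h3 : c.2.1 ≠ c.2.2)
    (x y : V) (q : Fin 4 → Fin 4 → ℤ) :
    ∑ φ : V → Fin 4, fB φ c * ((q (φ x) (φ y) : ℤ) : ℚ) = 0 := by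
  obtain ⟨z, hz, hzx, hzy⟩ := pick c.1 c.2.1 c.2.2 x y h1 h2 h3
  apply masterV c.1 c.2.1 c.2.2 h1 h2 h3 z hz (fun φ => ((q (φ x) (φ y) : ℤ) : ℚ))
  intro φ t
  rw [Function.update_of_ne (Ne.symm hzx) t φ, Function.update_of_ne (Ne.symm hzy) t φ]

lemma vanishWR (c c' : V × V × V)
    (h1 : c.1 ≠ c.2.1) (h2 : c.1 ≠ c.2.2) (h3 : c.2.1 ≠ c.2.2) :
    ∑ φ : V → Fin 4, fB φ c * lB φ c' = 0 := by
  have e : ∀ φ : V → Fin 4, fB φ c * lB φ c'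
      = fB φ c * ((Aq (φ c'.2.1) (φ c'.1) : ℤ) : ℚ)
        + fB φ c * ((Bq (φ c'.2.1) (φ c'.2.2) : ℤ) : ℚ)
        + fB φ c * ((Cq (φ c'.1) (φ c'.2.2) : ℤ) : ℚ) := by
    intro φ; unfold lB; ring
  rw [Finset.sum_congr rfl fun φ _ => e φ, Finset.sum_add_distrib, Finset.sum_add_distrib,
    vanish2 c h1 h2 h3 c'.2.1 c'.1 Aq, vanish2 c h1 h2 h3 c'.2.1 c'.2.2 Bq,
    vanish2 c h1 h2 h3 c'.1 c'.2.2 Cq]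
  ring

def Tau (c c' : V × V × V) : ℚ :=
  if keyF c = keyF c' then (if c.1 = c'.1 then 2 else -1) else 0

lemma perkey (Mk : Finset (V × V × V)) (n : V × V × V → ℚ)
    (hn1 : ∀ c ∈ Mk, 1 ≤ n c) (a b : V)
    (hab : ∀ c ∈ Mk, c.1 = a ∨ c.1 = b) :
    ∑ c ∈ Mk, n c
      ≤ ∑ c ∈ Mk, ∑ c' ∈ Mk, (n c * n c') * (if c.1 = c'.1 then (2:ℚ) else -1) := by
  classical
  have hn0 : ∀ c ∈ Mk, 0 ≤ n c := fun c hc => le_trans zero_le_one (hn1 c hc)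
  set A := Mk.filter (fun c => c.1 = a) with hA
  set B := Mk.filter (fun c => ¬ c.1 = a) with hB
  have hPQ : ∀ f : V × V × V → ℚ, ∑ c ∈ Mk, f c = ∑ c ∈ A, f c + ∑ c ∈ B, f c :=
    fun f => (Finset.sum_filter_add_sum_filter_not Mk _ f).symm
  have hAmem : ∀ c ∈ A, c ∈ Mk ∧ c.1 = a := fun c hc => Finset.mem_filter.mp hc
  have hBmem : ∀ c ∈ B, c ∈ Mk ∧ c.1 ≠ a := fun c hc => Finset.mem_filter.mp hc
  have hBmid : ∀ c ∈ B, c.1 = b := fun c hc =>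
    ((hab c (hBmem c hc).1).resolve_left (hBmem c hc).2)
  set P := ∑ c ∈ A, n c with hP
  set Q := ∑ c ∈ B, n c with hQ
  have hP0 : 0 ≤ P := Finset.sum_nonneg fun c hc => hn0 c (hAmem c hc).1
  have hQ0 : 0 ≤ Q := Finset.sum_nonneg fun c hc => hn0 c (hBmem c hc).1
  have hP1 : P = 0 ∨ 1 ≤ P := by
    rcases A.eq_empty_or_nonempty with he | ⟨c, hc⟩
    · left; rw [hP, he, Finset.sum_empty]
    · right
      calc (1:ℚ) ≤ n c := hn1 c (hAmem c hc).1
        _ ≤ P := Finset.single_le_sum (fun c' hc' => hn0 c' (hAmem c' hc').1) hc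
  have hQ1 : Q = 0 ∨ 1 ≤ Q := by
    rcases B.eq_empty_or_nonempty with he | ⟨c, hc⟩
    · left; rw [hQ, he, Finset.sum_empty]
    · right
      calc (1:ℚ) ≤ n c := hn1 c (hBmem c hc).1
        _ ≤ Q := Finset.single_le_sum (fun c' hc' => hn0 c' (hBmem c' hc').1) hc
  have eA : ∀ c ∈ A, ∑ c' ∈ Mk, (n c * n c') * (if c.1 = c'.1 then (2:ℚ) else -1)
      = n c * (2 * P - Q) := by
    intro c hc
    rw [hPQ]
    have e1 : ∑ c' ∈ A, (n c * n c') * (if c.1 = c'.1 then (2:ℚ) else -1)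
        = ∑ c' ∈ A, (2 * n c) * n c' := by
      refine Finset.sum_congr rfl fun c' hc' => ?_
      rw [if_pos ((hAmem c hc).2.trans (hAmem c' hc').2.symm)]; ring
    have e2 : ∑ c' ∈ B, (n c * n c') * (if c.1 = c'.1 then (2:ℚ) else -1)
        = ∑ c' ∈ B, (-(n c)) * n c' := by
      refine Finset.sum_congr rfl fun c' hc' => ?_
      rw [if_neg (fun h : c.1 = c'.1 => (hBmem c' hc').2 (h ▸ (hAmem c hc).2))]; ring
    rw [e1, e2, ← Finset.mul_sum, ← Finset.mul_sum, ← hP, ← hQ]; ring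
  have eB : ∀ c ∈ B, ∑ c' ∈ Mk, (n c * n c') * (if c.1 = c'.1 then (2:ℚ) else -1)
      = n c * (2 * Q - P) := by
    intro c hc
    rw [hPQ]
    have e1 : ∑ c' ∈ A, (n c * n c') * (if c.1 = c'.1 then (2:ℚ) else -1)
        = ∑ c' ∈ A, (-(n c)) * n c' := by
      refine Finset.sum_congr rfl fun c' hc' => ?_
      rw [if_neg (fun h : c.1 = c'.1 => (hBmem c hc).2 (h.symm ▸ (hAmem c' hc').2))]; ring
    have e2 : ∑ c' ∈ B, (n c * n c') * (if c.1 = c'.1 then (2:ℚ) else -1)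
        = ∑ c' ∈ B, (2 * n c) * n c' := by
      refine Finset.sum_congr rfl fun c' hc' => ?_
      rw [if_pos ((hBmid c hc).trans (hBmid c' hc').symm)]; ring
    rw [e1, e2, ← Finset.mul_sum, ← Finset.mul_sum, ← hP, ← hQ]; ring
  have hsum : ∑ c ∈ Mk, ∑ c' ∈ Mk, (n c * n c') * (if c.1 = c'.1 then (2:ℚ) else -1)
      = 2 * (P * P) + 2 * (Q * Q) - 2 * (P * Q) := by
    rw [hPQ, Finset.sum_congr rfl eA, Finset.sum_congr rfl eB,
      ← Finset.sum_mul, ← Finset.sum_mul, ← hP, ← hQ]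
    ring
  rw [hsum, hPQ n, ← hP, ← hQ]
  rcases hP1 with h | h <;> rcases hQ1 with h' | h' <;>
    nlinarith [sq_nonneg (P - Q), mul_nonneg hP0 hQ0]

theorem mainThm (𝓑 : Multiset (V × V × V))
    (hd : ∀ c ∈ 𝓑, c.1 ≠ c.2.1 ∧ c.1 ≠ c.2.2 ∧ c.2.1 ≠ c.2.2)
    (hred : ∀ u v w : V,
      ¬ (((u, v, w) ∈ 𝓑 ∨ (u, w, v) ∈ 𝓑) ∧ ((v, u, w) ∈ 𝓑 ∨ (v, w, u) ∈ 𝓑) ∧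
         ((w, u, v) ∈ 𝓑 ∨ (w, v, u) ∈ 𝓑))) :
    ((11 * 𝓑.card : ℚ) / 768) * 4 ^ (Fintype.card V)
      ≤ ∑ φ : V → Fin 4, ((𝓑.map (fun c =>
        if φ c.2.1 = φ c.1 ∧ φ c.1 = φ c.2.2 then (0:ℚ)
        else if φ c.2.1 = φ c.2.2 then -(1/3)
        else if φ c.1 = φ c.2.1 ∨ φ c.1 = φ c.2.2 then 1/6
        else if (φ c.2.1 < φ c.1 ∧ φ c.1 < φ c.2.2) ∨ (φ c.2.2 < φ c.1 ∧ φ c.1 < φ c.2.1)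
          then 2/3 else -(1/3))).sum) ^ 2 := by
  classical
  set N := Fintype.card V with hN
  set M := 𝓑.toFinset with hM
  set W : (V → Fin 4) → ℚ := fun φ => ∑ c ∈ M, (𝓑.count c : ℚ) * fB φ c with hW
  set R : (V → Fin 4) → ℚ := fun φ => ∑ c ∈ M, (𝓑.count c : ℚ) * lB φ c with hR
  have hdM : ∀ c ∈ M, c.1 ≠ c.2.1 ∧ c.1 ≠ c.2.2 ∧ c.2.1 ≠ c.2.2 :=
    fun c hc => hd c (Multiset.mem_toFinset.mp hc)
  -- decomposition of 96 * Y
  have hsplit : ∀ φ : V → Fin 4, 96 * ((𝓑.map (fun c =>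
        if φ c.2.1 = φ c.1 ∧ φ c.1 = φ c.2.2 then (0:ℚ)
        else if φ c.2.1 = φ c.2.2 then -(1/3)
        else if φ c.1 = φ c.2.1 ∨ φ c.1 = φ c.2.2 then 1/6
        else if (φ c.2.1 < φ c.1 ∧ φ c.1 < φ c.2.2) ∨ (φ c.2.2 < φ c.1 ∧ φ c.1 < φ c.2.1)
          then 2/3 else -(1/3))).sum) = W φ + R φ := by
    intro φ
    rw [Finset.sum_multiset_map_count, hW, hR]
    dsimp only
    rw [Finset.mul_sum, ← Finset.sum_add_distrib]
    refine Finset.sum_congr rfl fun c _ => ?_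
    rw [nsmul_eq_mul]
    have h96 : 96 * (if φ c.2.1 = φ c.1 ∧ φ c.1 = φ c.2.2 then (0:ℚ)
        else if φ c.2.1 = φ c.2.2 then -(1/3)
        else if φ c.1 = φ c.2.1 ∨ φ c.1 = φ c.2.2 then 1/6
        else if (φ c.2.1 < φ c.1 ∧ φ c.1 < φ c.2.2) ∨ (φ c.2.2 < φ c.1 ∧ φ c.1 < φ c.2.1)
          then 2/3 else -(1/3)) = fB φ c + lB φ c := by
      have hb := bridge (φ c.2.1) (φ c.1) (φ c.2.2)
      have hz := decompZ (φ c.2.1) (φ c.1) (φ c.2.2)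
      rw [hb, hz]
      unfold fB lB
      push_cast
      ring
    linear_combination (𝓑.count c : ℚ) * h96
  -- orthogonality
  have hWR : ∑ φ : V → Fin 4, W φ * R φ = 0 := by
    have e : ∀ φ : V → Fin 4, W φ * R φ
        = ∑ c ∈ M, ∑ c' ∈ M, ((𝓑.count c : ℚ) * (𝓑.count c' : ℚ)) * (fB φ c * lB φ c') := by
      intro φ
      rw [hW, hR]
      dsimp only
      rw [Finset.sum_mul_sum]
      exact Finset.sum_congr rfl fun c _ => Finset.sum_congr rfl fun c' _ => by ring
    rw [Finset.sum_congr rfl fun φ _ => e φ, Finset.sum_comm]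
    refine Finset.sum_eq_zero fun c hc => ?_
    rw [Finset.sum_comm]
    refine Finset.sum_eq_zero fun c' _ => ?_
    rw [← Finset.mul_sum, vanishWR c c' (hdM c hc).1 (hdM c hc).2.1 (hdM c hc).2.2, mul_zero]
  -- the square of W
  have hTall : ∀ c ∈ M, ∀ c' ∈ M, 64 * ∑ φ : V → Fin 4, fB φ c * fB φ c'
      = (4:ℚ) ^ N * 8448 * Tau c c' := by
    intro c hc c' hc'
    obtain ⟨h1, h2, h3⟩ := hdM c hc
    obtain ⟨h1', h2', h3'⟩ := hdM c' hc'
    by_cases hk : keyF c = keyF c'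
    · rw [pairT c c' h1 h2 h3 h1' h2' h3' hk.symm]
      unfold Tau
      rw [if_pos hk]
      by_cases hm : c.1 = c'.1
      · rw [if_pos hm, if_pos hm]; ring
      · rw [if_neg hm, if_neg hm]; ring
    · rw [crossKey c c' h1 h2 h3 h1' h2' h3' hk]
      unfold Tau
      rw [if_neg hk]
      ring
  have hws : ∀ φ : V → Fin 4, W φ ^ 2
      = ∑ c ∈ M, ∑ c' ∈ M, ((𝓑.count c : ℚ) * (𝓑.count c' : ℚ)) * (fB φ c * fB φ c') := by
    intro φ
    rw [pow_two, hW]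
    dsimp only
    rw [Finset.sum_mul_sum]
    exact Finset.sum_congr rfl fun c _ => Finset.sum_congr rfl fun c' _ => by ring
  have hsw : 64 * ∑ φ : V → Fin 4, W φ ^ 2
      = ∑ c ∈ M, ∑ c' ∈ M, ((𝓑.count c : ℚ) * (𝓑.count c' : ℚ))
          * ((4:ℚ) ^ N * 8448 * Tau c c') := by
    rw [Finset.sum_congr rfl fun φ _ => hws φ, Finset.sum_comm, Finset.mul_sum]
    refine Finset.sum_congr rfl fun c hc => ?_
    rw [Finset.sum_comm, Finset.mul_sum]
    refine Finset.sum_congr rfl fun c' hc' => ?_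
    rw [← Finset.mul_sum]
    calc 64 * ((𝓑.count c : ℚ) * (𝓑.count c' : ℚ) * ∑ φ : V → Fin 4, fB φ c * fB φ c')
        = ((𝓑.count c : ℚ) * (𝓑.count c' : ℚ))
            * (64 * ∑ φ : V → Fin 4, fB φ c * fB φ c') := by ring
      _ = ((𝓑.count c : ℚ) * (𝓑.count c' : ℚ)) * ((4:ℚ) ^ N * 8448 * Tau c c') := by
          rw [hTall c hc c' hc']
  -- the combinatorial inequality
  have hm : ∑ c ∈ M, (𝓑.count c : ℚ) = (𝓑.card : ℚ) := by
    rw [hM]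
    exact_mod_cast congrArg (Nat.cast : ℕ → ℚ) (Multiset.toFinset_sum_count_eq 𝓑)
  have hmid : ∀ k : Finset V, (M.filter (fun c => keyF c = k)).Nonempty →
      ∃ a b, ∀ c ∈ M.filter (fun c => keyF c = k), c.1 = a ∨ c.1 = b := by
    intro k hne
    obtain ⟨c0, hc0⟩ := hne
    by_cases hex : ∃ c1 ∈ M.filter (fun c => keyF c = k), c1.1 ≠ c0.1
    · obtain ⟨c1, hc1, hne1⟩ := hex
      refine ⟨c0.1, c1.1, fun c2 hc2 => ?_⟩
      by_contra hcon
      push_neg at hcon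
      obtain ⟨hne2, hne12⟩ := hcon
      have m0 := Finset.mem_filter.mp hc0
      have m1 := Finset.mem_filter.mp hc1
      have m2 := Finset.mem_filter.mp hc2
      have b0 : c0 ∈ 𝓑 := Multiset.mem_toFinset.mp m0.1
      have b1 : c1 ∈ 𝓑 := Multiset.mem_toFinset.mp m1.1
      have b2 : c2 ∈ 𝓑 := Multiset.mem_toFinset.mp m2.1
      obtain ⟨d1, d2, d3⟩ := hd c0 b0
      obtain ⟨d1', d2', d3'⟩ := hd c1 b1
      obtain ⟨d1'', d2'', d3''⟩ := hd c2 b2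
      have k1 : keyF c1 = keyF c0 := m1.2.trans m0.2.symm
      have k2 : keyF c2 = keyF c0 := m2.2.trans m0.2.symm
      have hp1 := mem_perm c0 c1 d1' d2' d3' k1
      have hp2 := mem_perm c0 c2 d1'' d2'' d3'' k2
      have hb23 : ((c0.2.1, c0.1, c0.2.2) ∈ 𝓑 ∨ (c0.2.1, c0.2.2, c0.1) ∈ 𝓑) ∧
          ((c0.2.2, c0.1, c0.2.1) ∈ 𝓑 ∨ (c0.2.2, c0.2.1, c0.1) ∈ 𝓑) := by
        rcases hp1 with rfl | rfl | rfl | rfl | rfl | rfl <;>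
          rcases hp2 with rfl | rfl | rfl | rfl | rfl | rfl <;>
          first
            | exact absurd rfl hne1
            | exact absurd rfl hne2
            | exact absurd rfl hne12
            | tauto
      exact hred c0.1 c0.2.1 c0.2.2 ⟨Or.inl b0, hb23.1, hb23.2⟩
    · push_neg at hex
      exact ⟨c0.1, c0.1, fun c hc => Or.inl (hex c hc)⟩
  have hcomb : (𝓑.card : ℚ)
      ≤ ∑ c ∈ M, ∑ c' ∈ M, ((𝓑.count c : ℚ) * (𝓑.count c' : ℚ)) * Tau c c' := by
    have hfib := Finset.sum_fiberwise M keyF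
      (fun c => ∑ c' ∈ M, ((𝓑.count c : ℚ) * (𝓑.count c' : ℚ)) * Tau c c')
    have hinner : ∀ k : Finset V, ∀ c ∈ M.filter (fun c => keyF c = k),
        ∑ c' ∈ M, ((𝓑.count c : ℚ) * (𝓑.count c' : ℚ)) * Tau c c'
          = ∑ c' ∈ M.filter (fun c' => keyF c' = k),
              ((𝓑.count c : ℚ) * (𝓑.count c' : ℚ)) * (if c.1 = c'.1 then (2:ℚ) else -1) := by
      intro k c hc
      obtain ⟨hcM, hkc⟩ := Finset.mem_filter.mp hc
      rw [Finset.sum_filter]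
      refine Finset.sum_congr rfl fun c' _ => ?_
      by_cases h : keyF c' = k
      · rw [if_pos h]
        unfold Tau
        rw [if_pos (hkc.trans h.symm)]
      · rw [if_neg h]
        unfold Tau
        rw [if_neg (fun hh => h (hh.symm.trans hkc)), mul_zero]
    have hgrp : ∑ c ∈ M, ∑ c' ∈ M, ((𝓑.count c : ℚ) * (𝓑.count c' : ℚ)) * Tau c c'
        = ∑ k : Finset V, ∑ c ∈ M.filter (fun c => keyF c = k),
            ∑ c' ∈ M.filter (fun c' => keyF c' = k),
              ((𝓑.count c : ℚ) * (𝓑.count c' : ℚ)) * (if c.1 = c'.1 then (2:ℚ) else -1) := by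
      rw [← hfib]
      exact Finset.sum_congr rfl fun k _ => Finset.sum_congr rfl (hinner k)
    have hmsplit : ∑ c ∈ M, (𝓑.count c : ℚ)
        = ∑ k : Finset V, ∑ c ∈ M.filter (fun c => keyF c = k), (𝓑.count c : ℚ) :=
      (Finset.sum_fiberwise M keyF (fun c => (𝓑.count c : ℚ))).symm
    have hPer : ∀ k : Finset V,
        ∑ c ∈ M.filter (fun c => keyF c = k), (𝓑.count c : ℚ)
          ≤ ∑ c ∈ M.filter (fun c => keyF c = k), ∑ c' ∈ M.filter (fun c' => keyF c' = k),
              ((𝓑.count c : ℚ) * (𝓑.count c' : ℚ)) * (if c.1 = c'.1 then (2:ℚ) else -1) := by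
      intro k
      rcases (M.filter (fun c => keyF c = k)).eq_empty_or_nonempty with he | hne
      · rw [he]; simp
      · obtain ⟨a, b, hab⟩ := hmid k hne
        refine perkey _ _ (fun c hc => ?_) a b hab
        have : c ∈ 𝓑 := Multiset.mem_toFinset.mp (Finset.mem_filter.mp hc).1
        exact_mod_cast Multiset.count_pos.mpr this
    calc (𝓑.card : ℚ) = ∑ c ∈ M, (𝓑.count c : ℚ) := hm.symm
      _ = ∑ k : Finset V, ∑ c ∈ M.filter (fun c => keyF c = k), (𝓑.count c : ℚ) := hmsplit
      _ ≤ ∑ k : Finset V, ∑ c ∈ M.filter (fun c => keyF c = k),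
            ∑ c' ∈ M.filter (fun c' => keyF c' = k),
              ((𝓑.count c : ℚ) * (𝓑.count c' : ℚ)) * (if c.1 = c'.1 then (2:ℚ) else -1) :=
          Finset.sum_le_sum fun k _ => hPer k
      _ = ∑ c ∈ M, ∑ c' ∈ M, ((𝓑.count c : ℚ) * (𝓑.count c' : ℚ)) * Tau c c' := hgrp.symm
  -- lower bound on ∑ W²
  have hpow : (0:ℚ) < (4:ℚ) ^ N := by positivity
  have hWW : 132 * ((𝓑.card : ℚ) * (4:ℚ) ^ N) ≤ ∑ φ : V → Fin 4, W φ ^ 2 := by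
    have h1 : ∑ c ∈ M, ∑ c' ∈ M, ((𝓑.count c : ℚ) * (𝓑.count c' : ℚ))
        * ((4:ℚ) ^ N * 8448 * Tau c c')
        = ((4:ℚ) ^ N * 8448) * ∑ c ∈ M, ∑ c' ∈ M,
            ((𝓑.count c : ℚ) * (𝓑.count c' : ℚ)) * Tau c c' := by
      rw [Finset.mul_sum]
      refine Finset.sum_congr rfl fun c _ => ?_
      rw [Finset.mul_sum]
      exact Finset.sum_congr rfl fun c' _ => by ring
    have h2 : ((4:ℚ) ^ N * 8448) * (𝓑.card : ℚ)
        ≤ ((4:ℚ) ^ N * 8448) * ∑ c ∈ M, ∑ c' ∈ M,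
            ((𝓑.count c : ℚ) * (𝓑.count c' : ℚ)) * Tau c c' := by
      apply mul_le_mul_of_nonneg_left hcomb
      positivity
    have h3 := hsw
    nlinarith [h3, h1, h2]
  have hRR : (0:ℚ) ≤ ∑ φ : V → Fin 4, R φ ^ 2 :=
    Finset.sum_nonneg fun φ _ => sq_nonneg _
  -- putting everything together
  have hbig : 9216 * ∑ φ : V → Fin 4, ((𝓑.map (fun c =>
        if φ c.2.1 = φ c.1 ∧ φ c.1 = φ c.2.2 then (0:ℚ)
        else if φ c.2.1 = φ c.2.2 then -(1/3)
        else if φ c.1 = φ c.2.1 ∨ φ c.1 = φ c.2.2 then 1/6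
        else if (φ c.2.1 < φ c.1 ∧ φ c.1 < φ c.2.2) ∨ (φ c.2.2 < φ c.1 ∧ φ c.1 < φ c.2.1)
          then 2/3 else -(1/3))).sum) ^ 2
      = ∑ φ : V → Fin 4, W φ ^ 2 + 2 * ∑ φ : V → Fin 4, W φ * R φ
          + ∑ φ : V → Fin 4, R φ ^ 2 := by
    rw [Finset.mul_sum, Finset.mul_sum, ← Finset.sum_add_distrib, ← Finset.sum_add_distrib]
    refine Finset.sum_congr rfl fun φ _ => ?_
    have h2 := congrArg (fun r : ℚ => r ^ 2) (hsplit φ)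
    try simp only [] at h2
    linarith [h2]
  rw [hN] at *
  linarith [hWW, hRR, hWR, hbig]

end Main

/-- A betweenness constraint is stored as `(v, u, w)`, meaning "`v` is between `u` and `w`". -/
theorem stmt13 {V : Type*} [Fintype V] [DecidableEq V]
    (𝓑 : Multiset (V × V × V))
    (hd : ∀ c ∈ 𝓑, c.1 ≠ c.2.1 ∧ c.1 ≠ c.2.2 ∧ c.2.1 ≠ c.2.2)
    (hred : ∀ u v w : V,
      ¬ (((u, v, w) ∈ 𝓑 ∨ (u, w, v) ∈ 𝓑) ∧ ((v, u, w) ∈ 𝓑 ∨ (v, w, u) ∈ 𝓑) ∧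
         ((w, u, v) ∈ 𝓑 ∨ (w, v, u) ∈ 𝓑))) :
    let YB : (V → Fin 4) → V × V × V → ℚ := fun φ c =>
      if φ c.2.1 = φ c.1 ∧ φ c.1 = φ c.2.2 then 0
      else if φ c.2.1 = φ c.2.2 then -(1/3)
      else if φ c.1 = φ c.2.1 ∨ φ c.1 = φ c.2.2 then 1/6
      else if (φ c.2.1 < φ c.1 ∧ φ c.1 < φ c.2.2) ∨ (φ c.2.2 < φ c.1 ∧ φ c.1 < φ c.2.1)
        then 2/3 else -(1/3)
    let Y : (V → Fin 4) → ℚ := fun φ => (𝓑.map (YB φ)).sum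
    ((11 * 𝓑.card : ℚ) / 768) * 4 ^ (Fintype.card V) ≤ ∑ φ : V → Fin 4, (Y φ) ^ 2 := by
  intro YB Y
  exact mainThm 𝓑 hd hred
end

section
/- With the setup of the key construction (arcs X'_p for (u,v), X''_p for (v,w), betweenness Y_p for (v,{u,w}), and Z_p for linear ordering constraint (u,v,w)), for every function φ: V → {0,1,2,3} and every p, Z_p = (X'_p + X''_p + Y_p)/2, where each quantity is the conditional satisfaction probability under a random φ-compatible ordering minus the corresponding average (1/2, 1/2, 1/3, 1/6). -/
open scoped Classical

lemma key1 (a b c : ℕ) (hab : a ≠ b) (hbc : b ≠ c) (hac : a ≠ c) :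
    ((if a < b ∧ b < c then 1 else 0) + 1 : ℕ) =
      (if a < b then 1 else 0) + (if b < c then 1 else 0) +
        (if c < b ∧ b < a then 1 else 0) := by
  split_ifs <;> omega

lemma key2 (a b c : ℕ) :
    ((if (a < b ∧ b < c) ∨ (c < b ∧ b < a) then 1 else 0) : ℕ) =
      (if a < b ∧ b < c then 1 else 0) + (if c < b ∧ b < a then 1 else 0) := by
  split_ifs <;> omega

lemma algebra_aux (A B C1 C2 Y N : ℚ) (hN : N ≠ 0) (h1 : A + N = C1 + C2 + B) (h2 : Y = A + B) :
    A/N - 1/6 = ((C1/N - 1/2) + (C2/N - 1/2) + (Y/N - 1/3))/2 := by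
  subst h2
  field_simp
  linear_combination 36 * h1

lemma exists_compat {V : Type*} [Fintype V] [DecidableEq V] (φ : V → Fin 4) :
    ∃ π : V ≃ Fin (Fintype.card V), ∀ x y, π x < π y → φ x ≤ φ y := by
  classical
  set n := Fintype.card V
  let e : V ≃ Fin n := Fintype.equivFin V
  let g : Fin n → (Fin 4) ×ₗ (Fin n) := fun i => toLex (φ (e.symm i), i)
  let σ := Tuple.sort g
  refine ⟨e.trans σ.symm, fun x y h => ?_⟩
  have hm : Monotone (g ∘ σ) := Tuple.monotone_sort g
  have := hm (le_of_lt h)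
  simp only [Function.comp, Equiv.trans_apply, Equiv.apply_symm_apply,
    Equiv.symm_apply_apply] at this
  rcases Prod.Lex.le_iff.mp this with h1 | h1
  · simp only [g, Equiv.symm_apply_apply] at h1
    exact le_of_lt h1
  · simp only [g, Equiv.symm_apply_apply] at h1
    exact le_of_eq h1.1

theorem stmt14 {V : Type*} [Fintype V] [DecidableEq V]
    (u v w : V) (huv : u ≠ v) (huw : u ≠ w) (hvw : v ≠ w) (φ : V → Fin 4) :
    let compat : (V ≃ Fin (Fintype.card V)) → Prop :=
      fun π => ∀ x y, π x < π y → φ x ≤ φ y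
    let prob : ((V ≃ Fin (Fintype.card V)) → Prop) → ℚ := fun p =>
      ((Finset.univ.filter (fun π => compat π ∧ p π)).card : ℚ) /
        ((Finset.univ.filter (fun π => compat π)).card : ℚ)
    prob (fun π => π u < π v ∧ π v < π w) - 1/6 =
      ((prob (fun π => π u < π v) - 1/2) + (prob (fun π => π v < π w) - 1/2) +
        (prob (fun π => (π u < π v ∧ π v < π w) ∨ (π w < π v ∧ π v < π u)) - 1/3)) / 2 := by
  intro compat prob
  set S := Finset.univ.filter (fun π : V ≃ Fin (Fintype.card V) => compat π) with hS
  have hfilter : ∀ p : (V ≃ Fin (Fintype.card V)) → Prop,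
      Finset.univ.filter (fun π => compat π ∧ p π) = S.filter p := by
    intro p; rw [hS, Finset.filter_filter]
  have hne : 0 < S.card := by
    obtain ⟨π₀, hπ₀⟩ := exists_compat φ
    exact Finset.card_pos.mpr ⟨π₀, Finset.mem_filter.mpr ⟨Finset.mem_univ _, hπ₀⟩⟩
  have h1 : (S.filter (fun π => π u < π v ∧ π v < π w)).card + S.card =
      (S.filter (fun π => π u < π v)).card + (S.filter (fun π => π v < π w)).card +
        (S.filter (fun π => π w < π v ∧ π v < π u)).card := by
    simp only [Finset.card_filter]
    rw [← Finset.sum_add_distrib, ← Finset.sum_add_distrib, Finset.card_eq_sum_ones,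
      ← Finset.sum_add_distrib]
    refine Finset.sum_congr rfl fun π _ => ?_
    have hab : ((π u : Fin _) : ℕ) ≠ π v := by
      simp only [ne_eq, Fin.val_eq_val]; exact fun h => huv (π.injective h)
    have hbc : ((π v : Fin _) : ℕ) ≠ π w := by
      simp only [ne_eq, Fin.val_eq_val]; exact fun h => hvw (π.injective h)
    have hac : ((π u : Fin _) : ℕ) ≠ π w := by
      simp only [ne_eq, Fin.val_eq_val]; exact fun h => huw (π.injective h)
    have := key1 (π u) (π v) (π w) hab hbc hac
    simp only [Fin.lt_def]
    exact this
  have h2 : (S.filter (fun π => (π u < π v ∧ π v < π w) ∨ (π w < π v ∧ π v < π u))).card =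
      (S.filter (fun π => π u < π v ∧ π v < π w)).card +
        (S.filter (fun π => π w < π v ∧ π v < π u)).card := by
    simp only [Finset.card_filter]
    rw [← Finset.sum_add_distrib]
    refine Finset.sum_congr rfl fun π _ => ?_
    have := key2 ((π u : Fin _) : ℕ) (π v) (π w)
    simp only [Fin.lt_def]
    exact this
  simp only [prob, hfilter]
  rw [← hS]
  have hN0 : ((S.card : ℚ)) ≠ 0 := by positivity
  have h1Q : ((S.filter (fun π => π u < π v ∧ π v < π w)).card : ℚ) + (S.card : ℚ) =
      ((S.filter (fun π => π u < π v)).card : ℚ) +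
      ((S.filter (fun π => π v < π w)).card : ℚ) +
      ((S.filter (fun π => π w < π v ∧ π v < π u)).card : ℚ) := by exact_mod_cast h1
  have h2Q : ((S.filter (fun π =>
        (π u < π v ∧ π v < π w) ∨ (π w < π v ∧ π v < π u))).card : ℚ) =
      ((S.filter (fun π => π u < π v ∧ π v < π w)).card : ℚ) +
      ((S.filter (fun π => π w < π v ∧ π v < π u)).card : ℚ) := by exact_mod_cast h2
  convert algebra_aux _ _ _ _ _ _ hN0 h1Q h2Q using 2 <;> congr!
end

section
/- In the setting of Lemma on second moments for Linear Ordering-AA: with φ uniform over functions V → {0,1,2,3}, the cross-covariance between any arc variable X_i and any betweenness variable Y_j vanishes: E[X_i Y_j] = 0. Consequently E[Z²] = E[X²] + E[Y²]/4 where Z = X + Y/2. -/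
private def fX (x y : Fin 4) : ℚ :=
  if x < y then 1/2 else if y < x then -(1/2) else 0

private def fY (x y z : Fin 4) : ℚ :=
  if y = x ∧ x = z then 0
  else if y = z then -(1/3)
  else if x = y ∨ x = z then 1/6
  else if (y < x ∧ x < z) ∨ (z < x ∧ x < y) then 2/3 else -(1/3)

private lemma fX_rev (x y : Fin 4) : fX x.rev y.rev = - fX x y := by
  unfold fX
  simp only [Fin.rev_lt_rev]
  rcases lt_trichotomy x y with h | h | h
  · simp [h, not_lt_of_gt h]
  · simp [h, lt_irrefl]
  · simp [h, not_lt_of_gt h]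

private lemma fY_rev (x y z : Fin 4) : fY x.rev y.rev z.rev = fY x y z := by
  unfold fY
  simp only [Fin.rev_inj, Fin.rev_lt_rev]
  simp only [show ((x < y ∧ z < x) ∨ (x < z ∧ y < x)) ↔ ((y < x ∧ x < z) ∨ (z < x ∧ x < y)) from
    by tauto]

private def revE (V : Type*) : (V → Fin 4) ≃ (V → Fin 4) where
  toFun φ := Fin.rev ∘ φ
  invFun φ := Fin.rev ∘ φ
  left_inv φ := funext fun v => Fin.rev_rev _
  right_inv φ := funext fun v => Fin.rev_rev _

private lemma sum_zero_of_anti {V : Type*} [Fintype V] [DecidableEq V]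
    (g : (V → Fin 4) → ℚ) (h : ∀ φ, g (Fin.rev ∘ φ) = - g φ) :
    ∑ φ : V → Fin 4, g φ = 0 := by
  have h1 : ∑ φ : V → Fin 4, g (revE V φ) = ∑ φ : V → Fin 4, g φ := Equiv.sum_comp (revE V) g
  have h2 : ∑ φ : V → Fin 4, g (revE V φ) = - ∑ φ : V → Fin 4, g φ := by
    rw [← Finset.sum_neg_distrib]
    exact Finset.sum_congr rfl fun φ _ => h φ
  linarith

/-- A betweenness constraint is stored as `(b, a, c)`, meaning "`b` is between `a` and `c`". -/
theorem stmt15 {V : Type*} [Fintype V] [DecidableEq V] :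
    let Xa : (V → Fin 4) → V × V → ℚ := fun φ a =>
      if φ a.1 < φ a.2 then 1/2 else if φ a.2 < φ a.1 then -(1/2) else 0
    let Yb : (V → Fin 4) → V × V × V → ℚ := fun φ c =>
      if φ c.2.1 = φ c.1 ∧ φ c.1 = φ c.2.2 then 0
      else if φ c.2.1 = φ c.2.2 then -(1/3)
      else if φ c.1 = φ c.2.1 ∨ φ c.1 = φ c.2.2 then 1/6
      else if (φ c.2.1 < φ c.1 ∧ φ c.1 < φ c.2.2) ∨ (φ c.2.2 < φ c.1 ∧ φ c.1 < φ c.2.1)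
        then 2/3 else -(1/3)
    (∀ a : V × V, a.1 ≠ a.2 → ∀ c : V × V × V,
      (c.1 ≠ c.2.1 ∧ c.1 ≠ c.2.2 ∧ c.2.1 ≠ c.2.2) →
      ∑ φ : V → Fin 4, Xa φ a * Yb φ c = 0) ∧
    (∀ A : Multiset (V × V), (∀ a ∈ A, a.1 ≠ a.2) →
      ∀ 𝓑 : Multiset (V × V × V),
        (∀ c ∈ 𝓑, c.1 ≠ c.2.1 ∧ c.1 ≠ c.2.2 ∧ c.2.1 ≠ c.2.2) →
      ∑ φ : V → Fin 4, ((A.map (Xa φ)).sum + (𝓑.map (Yb φ)).sum / 2) ^ 2 =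
        (∑ φ : V → Fin 4, ((A.map (Xa φ)).sum) ^ 2) +
          (∑ φ : V → Fin 4, ((𝓑.map (Yb φ)).sum) ^ 2) / 4) := by
  intro Xa Yb
  have hXdef : ∀ (φ : V → Fin 4) (a : V × V), Xa φ a = fX (φ a.1) (φ a.2) := fun _ _ => rfl
  have hYdef : ∀ (φ : V → Fin 4) (c : V × V × V),
      Yb φ c = fY (φ c.1) (φ c.2.1) (φ c.2.2) := fun _ _ => rfl
  have hXrev : ∀ (φ : V → Fin 4) (a : V × V), Xa (Fin.rev ∘ φ) a = - Xa φ a := by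
    intro φ a; rw [hXdef, hXdef]; exact fX_rev _ _
  have hYrev : ∀ (φ : V → Fin 4) (c : V × V × V), Yb (Fin.rev ∘ φ) c = Yb φ c := by
    intro φ c; rw [hYdef, hYdef]; exact fY_rev _ _ _
  constructor
  · intro a _ c _
    refine sum_zero_of_anti _ (fun φ => ?_)
    rw [hXrev, hYrev]; ring
  · intro A _ 𝓑 _
    have hSX : ∀ φ : V → Fin 4, (A.map (Xa (Fin.rev ∘ φ))).sum = -(A.map (Xa φ)).sum := by
      intro φ
      have : A.map (Xa (Fin.rev ∘ φ)) = A.map (fun a => - Xa φ a) :=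
        Multiset.map_congr rfl fun a _ => hXrev φ a
      rw [this]
      simpa using Multiset.sum_map_neg' (A.map (Xa φ))
    have hSY : ∀ φ : V → Fin 4, (𝓑.map (Yb (Fin.rev ∘ φ))).sum = (𝓑.map (Yb φ)).sum := by
      intro φ
      congr 1
      exact Multiset.map_congr rfl fun c _ => hYrev φ c
    have hcross : ∑ φ : V → Fin 4, (A.map (Xa φ)).sum * (𝓑.map (Yb φ)).sum = 0 := by
      refine sum_zero_of_anti _ (fun φ => ?_)
      rw [hSX, hSY]; ring
    have expand : ∀ φ : V → Fin 4,
        ((A.map (Xa φ)).sum + (𝓑.map (Yb φ)).sum / 2) ^ 2 =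
          ((A.map (Xa φ)).sum) ^ 2 + (A.map (Xa φ)).sum * (𝓑.map (Yb φ)).sum +
            ((𝓑.map (Yb φ)).sum) ^ 2 / 4 := fun φ => by ring
    rw [Finset.sum_congr rfl fun φ _ => expand φ, Finset.sum_add_distrib,
      Finset.sum_add_distrib, hcross, ← Finset.sum_div]
    ring
end

section
/- The graphs G_i defined recursively (G_0 is the complete symmetric digraph on 3 vertices decomposed into 2 directed triangles; G_i obtained from two copies of G_{i−1} by replacing one triangle from each copy by six new triangles c₁,…,c₆ as specified) satisfy: |V_i| = 3·2^i, G_i is a symmetric digraph without parallel arcs, and for every nonempty proper subset C*_i of the triangle decomposition C_i, the union of the arcs of the triangles in C*_i is not a symmetric digraph. -/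
/-- The vertex set of the recursively constructed graph `G_i`. -/
def Vt : ℕ → Type
  | 0 => Fin 3
  | (i+1) => Vt i ⊕ Vt i

instance VtDecEq : (i : ℕ) → DecidableEq (Vt i)
  | 0 => inferInstanceAs (DecidableEq (Fin 3))
  | (i+1) => @instDecidableEqSum _ _ (VtDecEq i) (VtDecEq i)

instance VtFintype : (i : ℕ) → Fintype (Vt i)
  | 0 => inferInstanceAs (Fintype (Fin 3))
  | (i+1) => @instFintypeSum _ _ (VtFintype i) (VtFintype i)

/-- The triangle decomposition `C_i` of `G_i`: a directed triangle `u v w u` is stored as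
`(u, v, w)`. At each step the chosen triangle in each of the two copies is the first one. -/
def Ct : (i : ℕ) → List (Vt i × Vt i × Vt i)
  | 0 => [((0 : Fin 3), (1 : Fin 3), (2 : Fin 3)), ((2 : Fin 3), (1 : Fin 3), (0 : Fin 3))]
  | (i+1) =>
    match Ct i with
    | [] => []
    | (a, b, c) :: rest =>
      (rest.map fun t => ((Sum.inl t.1 : Vt (i+1)), Sum.inl t.2.1, Sum.inl t.2.2)) ++
      (rest.map fun t => ((Sum.inr t.1 : Vt (i+1)), Sum.inr t.2.1, Sum.inr t.2.2)) ++
      [ ((Sum.inl a : Vt (i+1)), Sum.inl b, Sum.inr c),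
        ((Sum.inl b : Vt (i+1)), Sum.inl c, Sum.inr b),
        ((Sum.inl c : Vt (i+1)), Sum.inl a, Sum.inr a),
        ((Sum.inr a : Vt (i+1)), Sum.inr b, Sum.inl c),
        ((Sum.inr b : Vt (i+1)), Sum.inr c, Sum.inl b),
        ((Sum.inr c : Vt (i+1)), Sum.inr a, Sum.inl a) ]

/-- The arcs of the directed triangle `u v w u` stored as `(u, v, w)`. -/
def arcOf {A : Type*} (t : A × A × A) (p : A × A) : Prop :=
  p = (t.1, t.2.1) ∨ p = (t.2.1, t.2.2) ∨ p = (t.2.2, t.1)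

/-- The list of all arcs of a list of directed triangles. -/
def arcList {A : Type*} (L : List (A × A × A)) : List (A × A) :=
  L.flatMap fun t => [(t.1, t.2.1), (t.2.1, t.2.2), (t.2.2, t.1)]

attribute [reducible] Vt

section helpers
variable {α β : Type*}

def arcs (t : α × α × α) : List (α × α) := [(t.1, t.2.1), (t.2.1, t.2.2), (t.2.2, t.1)]

lemma arcOf_iff {t : α×α×α} {p} : arcOf t p ↔ p ∈ arcs t := by
  simp [arcOf, arcs]

lemma arcList_eq (L : List (α×α×α)) : arcList L = L.flatMap arcs := rfl

lemma mem_arcList {L : List (α×α×α)} {p} : p ∈ arcList L ↔ ∃ t ∈ L, arcOf t p := by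
  simp [arcList_eq, List.mem_flatMap, arcOf_iff]

lemma arcList_append (L₁ L₂ : List (α×α×α)) :
    arcList (L₁ ++ L₂) = arcList L₁ ++ arcList L₂ := by
  simp [arcList_eq]

def tmap (f : α → β) (t : α×α×α) : β×β×β := (f t.1, f t.2.1, f t.2.2)

lemma arcList_cons (t : α×α×α) (L : List (α×α×α)) :
    arcList (t :: L) = arcs t ++ arcList L := rfl

lemma arcList_map (f : α → β) (L : List (α×α×α)) :
    arcList (L.map (tmap f)) = (arcList L).map (Prod.map f f) := by
  induction L with
  | nil => rfl
  | cons t L ih => simp [arcList_cons, arcs, tmap, ih, Prod.map]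

lemma bind_unique {f : α → List β} : ∀ {L : List α}, (L.flatMap f).Nodup →
    ∀ {t t' : α}, t ∈ L → t' ∈ L → ∀ {p}, p ∈ f t → p ∈ f t' → t = t' := by
  intro L
  induction L with
  | nil => intro _ t t' h; simp at h
  | cons a L ih =>
    intro h t t' ht ht' p hp hp'
    rw [List.flatMap_cons, List.nodup_append] at h
    obtain ⟨h1, h2, h3⟩ := h
    rcases List.mem_cons.1 ht with rfl | hta
    · rcases List.mem_cons.1 ht' with rfl | hta'
      · rfl
      · exact absurd (List.mem_flatMap.2 ⟨t', hta', hp'⟩) (fun hm => h3 _ hp _ hm rfl)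
    · rcases List.mem_cons.1 ht' with rfl | hta'
      · exact absurd (List.mem_flatMap.2 ⟨t, hta, hp⟩) (fun hm => h3 _ hp' _ hm rfl)
      · exact ih h2 hta hta' hp hp'

lemma nodup_of_bind {f : α → List β} (hf : ∀ a, f a ≠ []) :
    ∀ {L : List α}, (L.flatMap f).Nodup → L.Nodup := by
  intro L
  induction L with
  | nil => intro; exact List.nodup_nil
  | cons a L ih =>
    intro h
    rw [List.flatMap_cons, List.nodup_append] at h
    obtain ⟨h1, h2, h3⟩ := h
    refine List.nodup_cons.2 ⟨fun ha => ?_, ih h2⟩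
    obtain ⟨p, hp⟩ := List.exists_mem_of_ne_nil _ (hf a)
    exact h3 _ hp _ (List.mem_flatMap.2 ⟨a, ha, hp⟩) rfl

lemma unique_tri {L : List (α×α×α)} (h : (arcList L).Nodup) {t t'}
    (ht : t ∈ L) (ht' : t' ∈ L) {p} (hp : arcOf t p) (hp' : arcOf t' p) : t = t' :=
  bind_unique (by rwa [arcList_eq] at h) ht ht' (arcOf_iff.1 hp) (arcOf_iff.1 hp')

lemma ct_nodup {L : List (α×α×α)} (h : (arcList L).Nodup) : L.Nodup :=
  nodup_of_bind (f := arcs) (fun a => by simp [arcs]) (by rwa [arcList_eq] at h)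
end helpers

lemma Ct_ne_nil : ∀ i, Ct i ≠ []
  | 0 => by simp [Ct]
  | (i+1) => by
    obtain ⟨⟨a, b, c⟩, rest, h⟩ : ∃ t rest, Ct i = t :: rest := by
      cases h : Ct i with
      | nil => exact absurd h (Ct_ne_nil i)
      | cons t r => exact ⟨t, r, rfl⟩
    simp [Ct, h]

lemma Ct_succ {i : ℕ} {a b c : Vt i} {rest} (h : Ct i = (a, b, c) :: rest) :
    Ct (i+1) =
      (rest.map (tmap Sum.inl)) ++ (rest.map (tmap Sum.inr)) ++
      [ ((Sum.inl a : Vt (i+1)), Sum.inl b, Sum.inr c),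
        ((Sum.inl b : Vt (i+1)), Sum.inl c, Sum.inr b),
        ((Sum.inl c : Vt (i+1)), Sum.inl a, Sum.inr a),
        ((Sum.inr a : Vt (i+1)), Sum.inr b, Sum.inl c),
        ((Sum.inr b : Vt (i+1)), Sum.inr c, Sum.inl b),
        ((Sum.inr c : Vt (i+1)), Sum.inr a, Sum.inl a) ] := by
  simp only [Ct, h]; rfl

def Closed {i : ℕ} (S : Finset (Vt i × Vt i × Vt i)) : Prop :=
  ∀ t ∈ S, ∀ u v, arcOf t (u, v) → ∃ t' ∈ S, arcOf t' (v, u)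

lemma key_s16 : ∀ i : ℕ,
    (arcList (Ct i)).Nodup ∧
    (∀ p ∈ arcList (Ct i), (p.2, p.1) ∈ arcList (Ct i)) ∧
    (∀ t ∈ Ct i, t.1 ≠ t.2.1 ∧ t.2.1 ≠ t.2.2 ∧ t.2.2 ≠ t.1) ∧
    (∀ S : Finset (Vt i × Vt i × Vt i), S ⊆ (Ct i).toFinset → Closed S → S.Nonempty →
      S = (Ct i).toFinset) := by
  intro i
  induction i with
  | zero =>
    refine ⟨by decide, by decide, by decide, ?_⟩
    intro S hS hcl hne
    have hmem : ∀ t ∈ S, t = ((0:Fin 3),(1:Fin 3),(2:Fin 3)) ∨ t = ((2:Fin 3),(1:Fin 3),(0:Fin 3)) := by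
      intro t ht
      have := hS ht
      simp [Ct] at this; exact this
    have h12 : (((0:Fin 3),(1:Fin 3),(2:Fin 3)) : Vt 0 × Vt 0 × Vt 0) ∈ S →
        (((2:Fin 3),(1:Fin 3),(0:Fin 3)) : Vt 0 × Vt 0 × Vt 0) ∈ S := by
      intro h
      obtain ⟨t', ht', harc⟩ := hcl _ h (0:Fin 3) (1:Fin 3) (by left; rfl)
      rcases hmem t' ht' with rfl | rfl
      · exact absurd harc (by unfold arcOf; decide)
      · exact ht'
    have h21 : (((2:Fin 3),(1:Fin 3),(0:Fin 3)) : Vt 0 × Vt 0 × Vt 0) ∈ S →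
        (((0:Fin 3),(1:Fin 3),(2:Fin 3)) : Vt 0 × Vt 0 × Vt 0) ∈ S := by
      intro h
      obtain ⟨t', ht', harc⟩ := hcl _ h (2:Fin 3) (1:Fin 3) (by left; rfl)
      rcases hmem t' ht' with rfl | rfl
      · exact ht'
      · exact absurd harc (by unfold arcOf; decide)
    obtain ⟨t, ht⟩ := hne
    refine Finset.Subset.antisymm hS ?_
    intro x hx
    have hx' : x = ((0:Fin 3),(1:Fin 3),(2:Fin 3)) ∨ x = ((2:Fin 3),(1:Fin 3),(0:Fin 3)) := by
      simp [Ct] at hx; exact hx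
    rcases hmem t ht with rfl | rfl
    · rcases hx' with rfl | rfl
      · exact ht
      · exact h12 ht
    · rcases hx' with rfl | rfl
      · exact h21 ht
      · exact ht
  | succ i ih =>
    obtain ⟨hnd, hsymm, hdist, hconn⟩ := ih
    obtain ⟨⟨a, b, c⟩, rest, hC⟩ : ∃ t rest, Ct i = t :: rest := by
      cases h : Ct i with
      | nil => exact absurd h (Ct_ne_nil i)
      | cons t r => exact ⟨t, r, rfl⟩
    obtain ⟨hab, hbc, hca⟩ := hdist (a, b, c) (hC ▸ List.mem_cons_self)
    have hC1 := Ct_succ hC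
    have hnd' : (arcs ((a,b,c) : Vt i × Vt i × Vt i)).Nodup ∧ (arcList rest).Nodup ∧
        (arcs ((a,b,c) : Vt i × Vt i × Vt i)).Disjoint (arcList rest) := by
      rw [hC, arcList_cons, List.nodup_append] at hnd
      exact ⟨hnd.1, hnd.2.1, fun x hx hy => hnd.2.2 x hx x hy rfl⟩
    obtain ⟨-, hndrest, hdisj⟩ := hnd'
    have hndL : ((a,b,c) :: rest).Nodup := hC ▸ ct_nodup hnd
    have hc0rest : ((a,b,c) : Vt i × Vt i × Vt i) ∉ rest := (List.nodup_cons.1 hndL).1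
    have hrestnd : rest.Nodup := (List.nodup_cons.1 hndL).2
    have hrev : ∀ u v : Vt i, arcOf (a,b,c) (u,v) → ∃ t ∈ rest, arcOf t (v,u) := by
      intro u v huv
      have h1 : ((u,v) : Vt i × Vt i) ∈ arcList (Ct i) :=
        mem_arcList.2 ⟨_, hC ▸ List.mem_cons_self, huv⟩
      have h2 := hsymm _ h1
      obtain ⟨t, htmem, harc⟩ := mem_arcList.1 h2
      refine ⟨t, ?_, harc⟩
      rw [hC] at htmem
      rcases List.mem_cons.1 htmem with rfl | h
      · exfalso
        rcases huv with h1|h1|h1 <;> rw [Prod.mk.injEq] at h1 <;> obtain ⟨rfl, rfl⟩ := h1 <;>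
          rcases harc with h2|h2|h2 <;> rw [Prod.mk.injEq] at h2 <;> obtain ⟨e1, e2⟩ := h2 <;>
          first
          | exact hab e1 | exact hab e2 | exact hab e1.symm | exact hab e2.symm
          | exact hbc e1 | exact hbc e2 | exact hbc e1.symm | exact hbc e2.symm
          | exact hca e1 | exact hca e2 | exact hca e1.symm | exact hca e2.symm
      · exact h
    have hA : arcList (Ct (i+1)) =
        (arcList rest).map (Prod.map Sum.inl Sum.inl) ++
        ((arcList rest).map (Prod.map Sum.inr Sum.inr) ++
        [((Sum.inl a : Vt (i+1)), Sum.inl b), (Sum.inl b, (Sum.inr c : Vt (i+1))), (Sum.inr c, Sum.inl a),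
         ((Sum.inl b : Vt (i+1)), Sum.inl c), (Sum.inl c, (Sum.inr b : Vt (i+1))), (Sum.inr b, Sum.inl b),
         ((Sum.inl c : Vt (i+1)), Sum.inl a), (Sum.inl a, (Sum.inr a : Vt (i+1))), (Sum.inr a, Sum.inl c),
         ((Sum.inr a : Vt (i+1)), Sum.inr b), (Sum.inr b, (Sum.inl c : Vt (i+1))), (Sum.inl c, Sum.inr a),
         ((Sum.inr b : Vt (i+1)), Sum.inr c), (Sum.inr c, (Sum.inl b : Vt (i+1))), (Sum.inl b, Sum.inr b),
         ((Sum.inr c : Vt (i+1)), Sum.inr a), (Sum.inr a, (Sum.inl a : Vt (i+1))), (Sum.inl a, Sum.inr c)]) := by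
      rw [hC1, List.append_assoc, arcList_append, arcList_append, arcList_map, arcList_map]
      rfl
    have hinjl : Function.Injective (Prod.map (Sum.inl : Vt i → Vt (i+1)) (Sum.inl : Vt i → Vt (i+1))) := by
      rintro ⟨p1, p2⟩ ⟨q1, q2⟩ h
      simp only [Prod.map, Prod.mk.injEq, Sum.inl.injEq] at h
      simp [h.1, h.2]
    have hinjr : Function.Injective (Prod.map (Sum.inr : Vt i → Vt (i+1)) (Sum.inr : Vt i → Vt (i+1))) := by
      rintro ⟨p1, p2⟩ ⟨q1, q2⟩ h
      simp only [Prod.map, Prod.mk.injEq, Sum.inr.injEq] at h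
      simp [h.1, h.2]
    have hab' := Ne.symm hab
    have hbc' := Ne.symm hbc
    have hca' := Ne.symm hca
    have hndA1 : (arcList (Ct (i+1))).Nodup := by
      rw [hA, List.nodup_append, List.nodup_append]
      refine ⟨hndrest.map hinjl, ⟨hndrest.map hinjr, ?_, ?_⟩, ?_⟩
      · -- 18-list nodup
        simp [List.nodup_cons, Prod.mk.injEq, not_or]
        tauto
      · -- Disjoint (map inr) Z
        rintro p hp _ hq rfl
        obtain ⟨⟨q1, q2⟩, hmem, rfl⟩ := List.mem_map.1 hp
        simp only [List.mem_cons, List.not_mem_nil, or_false] at hq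
        rcases hq with h|h|h|h|h|h|h|h|h|h|h|h|h|h|h|h|h|h <;>
          simp only [Prod.map, Prod.mk.injEq, Sum.inr.injEq, reduceCtorEq, false_and, and_false] at h <;>
          (obtain ⟨rfl, rfl⟩ := h; exact hdisj (by simp [arcs]) hmem)
      · -- Disjoint (map inl) (map inr ++ Z)
        rintro p hp _ hq rfl
        obtain ⟨⟨q1, q2⟩, hmem, rfl⟩ := List.mem_map.1 hp
        rcases List.mem_append.1 hq with h | h
        · obtain ⟨⟨r1, r2⟩, hmem', he⟩ := List.mem_map.1 h
          simp [Prod.map, Prod.mk.injEq] at he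
        · simp only [List.mem_cons, List.not_mem_nil, or_false] at h
          rcases h with h|h|h|h|h|h|h|h|h|h|h|h|h|h|h|h|h|h <;>
            simp only [Prod.map, Prod.mk.injEq, Sum.inl.injEq, reduceCtorEq, false_and, and_false] at h <;>
            (obtain ⟨rfl, rfl⟩ := h; exact hdisj (by simp [arcs]) hmem)
    have hrevmem : ∀ u v : Vt i, arcOf (a,b,c) (u,v) → ((v,u) : Vt i × Vt i) ∈ arcList rest := by
      intro u v h
      obtain ⟨t, ht, harc⟩ := hrev u v h
      exact mem_arcList.2 ⟨t, ht, harc⟩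
    have hba := hrevmem a b (Or.inl rfl)
    have hcb := hrevmem b c (Or.inr (Or.inl rfl))
    have hac := hrevmem c a (Or.inr (Or.inr rfl))
    have hsymm1 : ∀ p ∈ arcList (Ct (i+1)), (p.2, p.1) ∈ arcList (Ct (i+1)) := by
      intro p hp
      rw [hA] at hp ⊢
      rcases List.mem_append.1 hp with h | h
      · obtain ⟨⟨q1, q2⟩, hq, rfl⟩ := List.mem_map.1 h
        have hmem : ((q1, q2) : Vt i × Vt i) ∈ arcList (Ct i) := by
          rw [hC, arcList_cons]; exact List.mem_append_right _ hq
        have h2 := hsymm _ hmem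
        rw [hC, arcList_cons] at h2
        rcases List.mem_append.1 h2 with h3 | h3
        · simp only [arcs, List.mem_cons, List.not_mem_nil, or_false] at h3
          rcases h3 with h3|h3|h3 <;> rw [Prod.mk.injEq] at h3 <;> obtain ⟨rfl, rfl⟩ := h3 <;>
            (refine List.mem_append_right _ (List.mem_append_right _ ?_); simp [Prod.map])
        · exact List.mem_append_left _ (List.mem_map.2 ⟨(q2, q1), h3, rfl⟩)
      · rcases List.mem_append.1 h with h | h
        · obtain ⟨⟨q1, q2⟩, hq, rfl⟩ := List.mem_map.1 h
          have hmem : ((q1, q2) : Vt i × Vt i) ∈ arcList (Ct i) := by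
            rw [hC, arcList_cons]; exact List.mem_append_right _ hq
          have h2 := hsymm _ hmem
          rw [hC, arcList_cons] at h2
          rcases List.mem_append.1 h2 with h3 | h3
          · simp only [arcs, List.mem_cons, List.not_mem_nil, or_false] at h3
            rcases h3 with h3|h3|h3 <;> rw [Prod.mk.injEq] at h3 <;> obtain ⟨rfl, rfl⟩ := h3 <;>
              (refine List.mem_append_right _ (List.mem_append_right _ ?_); simp [Prod.map])
          · exact List.mem_append_right _
              (List.mem_append_left _ (List.mem_map.2 ⟨(q2, q1), h3, rfl⟩))
        · simp only [List.mem_cons, List.not_mem_nil, or_false] at h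
          rcases h with h|h|h|h|h|h|h|h|h|h|h|h|h|h|h|h|h|h <;> subst h <;>
            first
            | (refine List.mem_append_right _ (List.mem_append_right _ ?_); simp [Prod.map]; done)
            | exact List.mem_append_left _ (List.mem_map.2 ⟨(b, a), hba, rfl⟩)
            | exact List.mem_append_left _ (List.mem_map.2 ⟨(c, b), hcb, rfl⟩)
            | exact List.mem_append_left _ (List.mem_map.2 ⟨(a, c), hac, rfl⟩)
            | exact List.mem_append_right _
                (List.mem_append_left _ (List.mem_map.2 ⟨(b, a), hba, rfl⟩))
            | exact List.mem_append_right _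
                (List.mem_append_left _ (List.mem_map.2 ⟨(c, b), hcb, rfl⟩))
            | exact List.mem_append_right _
                (List.mem_append_left _ (List.mem_map.2 ⟨(a, c), hac, rfl⟩))
    have hdist1 : ∀ t ∈ Ct (i+1), t.1 ≠ t.2.1 ∧ t.2.1 ≠ t.2.2 ∧ t.2.2 ≠ t.1 := by
      intro t ht
      rw [hC1] at ht
      rcases List.mem_append.1 ht with h | h
      · rcases List.mem_append.1 h with h | h <;> obtain ⟨⟨x, y, z⟩, hq, rfl⟩ := List.mem_map.1 h <;>
          obtain ⟨h1, h2, h3⟩ := hdist _ (hC ▸ List.mem_cons_of_mem _ hq) <;>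
          exact ⟨fun hh => h1 (by first | exact Sum.inl_injective hh | exact Sum.inr_injective hh),
            fun hh => h2 (by first | exact Sum.inl_injective hh | exact Sum.inr_injective hh),
            fun hh => h3 (by first | exact Sum.inl_injective hh | exact Sum.inr_injective hh)⟩
      · simp only [List.mem_cons, List.not_mem_nil, or_false] at h
        rcases h with h|h|h|h|h|h <;> subst h <;>
          exact ⟨fun hh => by
            first
            | exact hab (Sum.inl_injective hh) | exact hab (Sum.inr_injective hh)
            | exact hbc (Sum.inl_injective hh) | exact hbc (Sum.inr_injective hh)
            | exact hca (Sum.inl_injective hh) | exact hca (Sum.inr_injective hh),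
            by simp, by simp⟩
    -- helper arc-lifting lemmas
    have harcmapl : ∀ (t : Vt i × Vt i × Vt i) (u v : Vt i), arcOf t (u, v) →
        arcOf (tmap Sum.inl t) ((Sum.inl u : Vt (i+1)), Sum.inl v) := by
      intro t u v h
      rcases h with h|h|h <;> rw [Prod.mk.injEq] at h <;> obtain ⟨rfl, rfl⟩ := h
      · exact Or.inl rfl
      · exact Or.inr (Or.inl rfl)
      · exact Or.inr (Or.inr rfl)
    have harcmapr : ∀ (t : Vt i × Vt i × Vt i) (u v : Vt i), arcOf t (u, v) →
        arcOf (tmap Sum.inr t) ((Sum.inr u : Vt (i+1)), Sum.inr v) := by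
      intro t u v h
      rcases h with h|h|h <;> rw [Prod.mk.injEq] at h <;> obtain ⟨rfl, rfl⟩ := h
      · exact Or.inl rfl
      · exact Or.inr (Or.inl rfl)
      · exact Or.inr (Or.inr rfl)
    have harcmapl' : ∀ (t : Vt i × Vt i × Vt i) (u v : Vt i),
        arcOf (tmap Sum.inl t) ((Sum.inl u : Vt (i+1)), Sum.inl v) → arcOf t (u, v) := by
      rintro ⟨t1, t2, t3⟩ u v h
      rcases h with h|h|h <;> simp only [tmap, Prod.mk.injEq, Sum.inl.injEq] at h <;>
        obtain ⟨rfl, rfl⟩ := h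
      · exact Or.inl rfl
      · exact Or.inr (Or.inl rfl)
      · exact Or.inr (Or.inr rfl)
    have harcmapr' : ∀ (t : Vt i × Vt i × Vt i) (u v : Vt i),
        arcOf (tmap Sum.inr t) ((Sum.inr u : Vt (i+1)), Sum.inr v) → arcOf t (u, v) := by
      rintro ⟨t1, t2, t3⟩ u v h
      rcases h with h|h|h <;> simp only [tmap, Prod.mk.injEq, Sum.inr.injEq] at h <;>
        obtain ⟨rfl, rfl⟩ := h
      · exact Or.inl rfl
      · exact Or.inr (Or.inl rfl)
      · exact Or.inr (Or.inr rfl)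
    -- memberships in Ct (i+1)
    have hmL : ∀ t ∈ rest, tmap Sum.inl t ∈ Ct (i+1) := by
      intro t ht; rw [hC1]
      exact List.mem_append_left _ (List.mem_append_left _ (List.mem_map.2 ⟨t, ht, rfl⟩))
    have hmR : ∀ t ∈ rest, tmap Sum.inr t ∈ Ct (i+1) := by
      intro t ht; rw [hC1]
      exact List.mem_append_left _ (List.mem_append_right _ (List.mem_map.2 ⟨t, ht, rfl⟩))
    have hm1 : ((Sum.inl a, Sum.inl b, Sum.inr c) : Vt (i+1) × Vt (i+1) × Vt (i+1)) ∈ Ct (i+1) := by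
      rw [hC1]; simp
    have hm2 : ((Sum.inl b, Sum.inl c, Sum.inr b) : Vt (i+1) × Vt (i+1) × Vt (i+1)) ∈ Ct (i+1) := by
      rw [hC1]; simp
    have hm3 : ((Sum.inl c, Sum.inl a, Sum.inr a) : Vt (i+1) × Vt (i+1) × Vt (i+1)) ∈ Ct (i+1) := by
      rw [hC1]; simp
    have hm4 : ((Sum.inr a, Sum.inr b, Sum.inl c) : Vt (i+1) × Vt (i+1) × Vt (i+1)) ∈ Ct (i+1) := by
      rw [hC1]; simp
    have hm5 : ((Sum.inr b, Sum.inr c, Sum.inl b) : Vt (i+1) × Vt (i+1) × Vt (i+1)) ∈ Ct (i+1) := by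
      rw [hC1]; simp
    have hm6 : ((Sum.inr c, Sum.inr a, Sum.inl a) : Vt (i+1) × Vt (i+1) × Vt (i+1)) ∈ Ct (i+1) := by
      rw [hC1]; simp
    obtain ⟨tba, htba, hatba⟩ := hrev a b (Or.inl rfl)
    obtain ⟨tcb, htcb, hatcb⟩ := hrev b c (Or.inr (Or.inl rfl))
    obtain ⟨tac, htac, hatac⟩ := hrev c a (Or.inr (Or.inr rfl))
    refine ⟨hndA1, hsymm1, hdist1, ?_⟩
    intro S hS hcl hne
    have hstep : ∀ t ∈ S, ∀ u v : Vt (i+1), arcOf t (u, v) →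
        ∀ t₀ ∈ Ct (i+1), arcOf t₀ (v, u) → t₀ ∈ S := by
      intro t htS u v harc t₀ ht₀ harc₀
      obtain ⟨t', ht'S, harc'⟩ := hcl t htS u v harc
      have ht'm : t' ∈ Ct (i+1) := List.mem_toFinset.1 (hS ht'S)
      exact (unique_tri hndA1 ht'm ht₀ harc' harc₀) ▸ ht'S
    by_cases hX : ((Sum.inl a, Sum.inl b, Sum.inr c) : Vt (i+1) × Vt (i+1) × Vt (i+1)) ∈ S ∨
        ((Sum.inl b, Sum.inl c, Sum.inr b) : Vt (i+1) × Vt (i+1) × Vt (i+1)) ∈ S ∨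
        ((Sum.inl c, Sum.inl a, Sum.inr a) : Vt (i+1) × Vt (i+1) × Vt (i+1)) ∈ S ∨
        ((Sum.inr a, Sum.inr b, Sum.inl c) : Vt (i+1) × Vt (i+1) × Vt (i+1)) ∈ S ∨
        ((Sum.inr b, Sum.inr c, Sum.inl b) : Vt (i+1) × Vt (i+1) × Vt (i+1)) ∈ S ∨
        ((Sum.inr c, Sum.inr a, Sum.inl a) : Vt (i+1) × Vt (i+1) × Vt (i+1)) ∈ S
    · -- Case A : some new triangle is in S; then all are, and S is everything
      have i15 : ((Sum.inl a, Sum.inl b, Sum.inr c) : Vt (i+1) × Vt (i+1) × Vt (i+1)) ∈ S →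
          ((Sum.inr b, Sum.inr c, Sum.inl b) : Vt (i+1) × Vt (i+1) × Vt (i+1)) ∈ S := fun h =>
        hstep _ h (Sum.inl b) (Sum.inr c) (Or.inr (Or.inl rfl)) _ hm5 (Or.inr (Or.inl rfl))
      have i52 : ((Sum.inr b, Sum.inr c, Sum.inl b) : Vt (i+1) × Vt (i+1) × Vt (i+1)) ∈ S →
          ((Sum.inl b, Sum.inl c, Sum.inr b) : Vt (i+1) × Vt (i+1) × Vt (i+1)) ∈ S := fun h =>
        hstep _ h (Sum.inl b) (Sum.inr b) (Or.inr (Or.inr rfl)) _ hm2 (Or.inr (Or.inr rfl))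
      have i24 : ((Sum.inl b, Sum.inl c, Sum.inr b) : Vt (i+1) × Vt (i+1) × Vt (i+1)) ∈ S →
          ((Sum.inr a, Sum.inr b, Sum.inl c) : Vt (i+1) × Vt (i+1) × Vt (i+1)) ∈ S := fun h =>
        hstep _ h (Sum.inl c) (Sum.inr b) (Or.inr (Or.inl rfl)) _ hm4 (Or.inr (Or.inl rfl))
      have i43 : ((Sum.inr a, Sum.inr b, Sum.inl c) : Vt (i+1) × Vt (i+1) × Vt (i+1)) ∈ S →
          ((Sum.inl c, Sum.inl a, Sum.inr a) : Vt (i+1) × Vt (i+1) × Vt (i+1)) ∈ S := fun h =>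
        hstep _ h (Sum.inl c) (Sum.inr a) (Or.inr (Or.inr rfl)) _ hm3 (Or.inr (Or.inr rfl))
      have i36 : ((Sum.inl c, Sum.inl a, Sum.inr a) : Vt (i+1) × Vt (i+1) × Vt (i+1)) ∈ S →
          ((Sum.inr c, Sum.inr a, Sum.inl a) : Vt (i+1) × Vt (i+1) × Vt (i+1)) ∈ S := fun h =>
        hstep _ h (Sum.inl a) (Sum.inr a) (Or.inr (Or.inl rfl)) _ hm6 (Or.inr (Or.inl rfl))
      have i61 : ((Sum.inr c, Sum.inr a, Sum.inl a) : Vt (i+1) × Vt (i+1) × Vt (i+1)) ∈ S →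
          ((Sum.inl a, Sum.inl b, Sum.inr c) : Vt (i+1) × Vt (i+1) × Vt (i+1)) ∈ S := fun h =>
        hstep _ h (Sum.inl a) (Sum.inr c) (Or.inr (Or.inr rfl)) _ hm1 (Or.inr (Or.inr rfl))
      have h1S : ((Sum.inl a, Sum.inl b, Sum.inr c) : Vt (i+1) × Vt (i+1) × Vt (i+1)) ∈ S := by
        rcases hX with h|h|h|h|h|h
        · exact h
        · exact i61 (i36 (i43 (i24 h)))
        · exact i61 (i36 h)
        · exact i61 (i36 (i43 h))
        · exact i61 (i36 (i43 (i24 (i52 h))))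
        · exact i61 h
      have h2S := i52 (i15 h1S)
      have h4S := i24 h2S
      have h3S := i43 h4S
      have h6S := i36 h3S
      have h5S := i15 h1S
      -- left copy
      have hLmem : ∀ r ∈ rest, tmap Sum.inl r ∈ S := by
        set SL : Finset (Vt i × Vt i × Vt i) :=
          insert (a, b, c) ((Ct i).toFinset.filter fun t => tmap Sum.inl t ∈ S) with hSLdef
        have hSLsub : SL ⊆ (Ct i).toFinset := by
          intro t ht
          rcases Finset.mem_insert.1 ht with rfl | ht
          · exact List.mem_toFinset.2 (hC ▸ List.mem_cons_self)
          · exact Finset.mem_of_mem_filter _ ht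
        have hSLcl : Closed SL := by
          intro t htS u v harc
          rcases Finset.mem_insert.1 htS with rfl | htf
          · rcases harc with h|h|h <;> rw [Prod.mk.injEq] at h <;> rw [h.1, h.2]
            · refine ⟨tba, Finset.mem_insert_of_mem (Finset.mem_filter.2
                ⟨List.mem_toFinset.2 (hC ▸ List.mem_cons_of_mem _ htba), ?_⟩), hatba⟩
              exact hstep _ h1S (Sum.inl a) (Sum.inl b) (Or.inl rfl) _ (hmL tba htba)
                (harcmapl tba b a hatba)
            · refine ⟨tcb, Finset.mem_insert_of_mem (Finset.mem_filter.2
                ⟨List.mem_toFinset.2 (hC ▸ List.mem_cons_of_mem _ htcb), ?_⟩), hatcb⟩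
              exact hstep _ h2S (Sum.inl b) (Sum.inl c) (Or.inl rfl) _ (hmL tcb htcb)
                (harcmapl tcb c b hatcb)
            · refine ⟨tac, Finset.mem_insert_of_mem (Finset.mem_filter.2
                ⟨List.mem_toFinset.2 (hC ▸ List.mem_cons_of_mem _ htac), ?_⟩), hatac⟩
              exact hstep _ h3S (Sum.inl c) (Sum.inl a) (Or.inl rfl) _ (hmL tac htac)
                (harcmapl tac a c hatac)
          · obtain ⟨htCt, htS'⟩ := Finset.mem_filter.1 htf
            obtain ⟨t'', ht''Ct, harc''⟩ := mem_arcList.1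
              (hsymm (u, v) (mem_arcList.2 ⟨t, List.mem_toFinset.1 htCt, harc⟩))
            by_cases hteq : t'' = (a, b, c)
            · exact ⟨(a, b, c), Finset.mem_insert_self _ _, hteq ▸ harc''⟩
            · have ht''rest : t'' ∈ rest := by
                rw [hC] at ht''Ct
                rcases List.mem_cons.1 ht''Ct with h | h
                · exact absurd h hteq
                · exact h
              refine ⟨t'', Finset.mem_insert_of_mem (Finset.mem_filter.2
                ⟨List.mem_toFinset.2 ht''Ct, ?_⟩), harc''⟩
              exact hstep _ htS' (Sum.inl u) (Sum.inl v) (harcmapl t u v harc) _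
                (hmL t'' ht''rest) (harcmapl t'' v u harc'')
        have hSLfull := hconn SL hSLsub hSLcl ⟨_, Finset.mem_insert_self _ _⟩
        intro r hr
        have hrSL : r ∈ SL := by
          rw [hSLfull]
          exact List.mem_toFinset.2 (hC ▸ List.mem_cons_of_mem _ hr)
        rcases Finset.mem_insert.1 hrSL with h | h
        · exact absurd (h ▸ hr) hc0rest
        · exact (Finset.mem_filter.1 h).2
      -- right copy
      have hRmem : ∀ r ∈ rest, tmap Sum.inr r ∈ S := by
        set SR : Finset (Vt i × Vt i × Vt i) :=
          insert (a, b, c) ((Ct i).toFinset.filter fun t => tmap Sum.inr t ∈ S) with hSRdef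
        have hSRsub : SR ⊆ (Ct i).toFinset := by
          intro t ht
          rcases Finset.mem_insert.1 ht with rfl | ht
          · exact List.mem_toFinset.2 (hC ▸ List.mem_cons_self)
          · exact Finset.mem_of_mem_filter _ ht
        have hSRcl : Closed SR := by
          intro t htS u v harc
          rcases Finset.mem_insert.1 htS with rfl | htf
          · rcases harc with h|h|h <;> rw [Prod.mk.injEq] at h <;> rw [h.1, h.2]
            · refine ⟨tba, Finset.mem_insert_of_mem (Finset.mem_filter.2
                ⟨List.mem_toFinset.2 (hC ▸ List.mem_cons_of_mem _ htba), ?_⟩), hatba⟩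
              exact hstep _ h4S (Sum.inr a) (Sum.inr b) (Or.inl rfl) _ (hmR tba htba)
                (harcmapr tba b a hatba)
            · refine ⟨tcb, Finset.mem_insert_of_mem (Finset.mem_filter.2
                ⟨List.mem_toFinset.2 (hC ▸ List.mem_cons_of_mem _ htcb), ?_⟩), hatcb⟩
              exact hstep _ h5S (Sum.inr b) (Sum.inr c) (Or.inl rfl) _ (hmR tcb htcb)
                (harcmapr tcb c b hatcb)
            · refine ⟨tac, Finset.mem_insert_of_mem (Finset.mem_filter.2
                ⟨List.mem_toFinset.2 (hC ▸ List.mem_cons_of_mem _ htac), ?_⟩), hatac⟩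
              exact hstep _ h6S (Sum.inr c) (Sum.inr a) (Or.inl rfl) _ (hmR tac htac)
                (harcmapr tac a c hatac)
          · obtain ⟨htCt, htS'⟩ := Finset.mem_filter.1 htf
            obtain ⟨t'', ht''Ct, harc''⟩ := mem_arcList.1
              (hsymm (u, v) (mem_arcList.2 ⟨t, List.mem_toFinset.1 htCt, harc⟩))
            by_cases hteq : t'' = (a, b, c)
            · exact ⟨(a, b, c), Finset.mem_insert_self _ _, hteq ▸ harc''⟩
            · have ht''rest : t'' ∈ rest := by
                rw [hC] at ht''Ct
                rcases List.mem_cons.1 ht''Ct with h | h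
                · exact absurd h hteq
                · exact h
              refine ⟨t'', Finset.mem_insert_of_mem (Finset.mem_filter.2
                ⟨List.mem_toFinset.2 ht''Ct, ?_⟩), harc''⟩
              exact hstep _ htS' (Sum.inr u) (Sum.inr v) (harcmapr t u v harc) _
                (hmR t'' ht''rest) (harcmapr t'' v u harc'')
        have hSRfull := hconn SR hSRsub hSRcl ⟨_, Finset.mem_insert_self _ _⟩
        intro r hr
        have hrSR : r ∈ SR := by
          rw [hSRfull]
          exact List.mem_toFinset.2 (hC ▸ List.mem_cons_of_mem _ hr)
        rcases Finset.mem_insert.1 hrSR with h | h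
        · exact absurd (h ▸ hr) hc0rest
        · exact (Finset.mem_filter.1 h).2
      refine Finset.Subset.antisymm hS ?_
      intro t ht
      rw [List.mem_toFinset, hC1] at ht
      rcases List.mem_append.1 ht with h | h
      · rcases List.mem_append.1 h with h | h
        · obtain ⟨r, hr, rfl⟩ := List.mem_map.1 h
          exact hLmem r hr
        · obtain ⟨r, hr, rfl⟩ := List.mem_map.1 h
          exact hRmem r hr
      · simp only [List.mem_cons, List.not_mem_nil, or_false] at h
        rcases h with h|h|h|h|h|h <;> subst h <;> assumption
    · -- Case B : no new triangle in S; impossible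
      exfalso
      push_neg at hX
      obtain ⟨hX1, hX2, hX3, hX4, hX5, hX6⟩ := hX
      obtain ⟨t0, ht0⟩ := hne
      have ht0m : t0 ∈ Ct (i+1) := List.mem_toFinset.1 (hS ht0)
      rw [hC1] at ht0m
      rcases List.mem_append.1 ht0m with h0 | h0
      swap
      · simp only [List.mem_cons, List.not_mem_nil, or_false] at h0
        rcases h0 with h|h|h|h|h|h <;> subst h <;>
          first
          | exact hX1 ht0 | exact hX2 ht0 | exact hX3 ht0
          | exact hX4 ht0 | exact hX5 ht0 | exact hX6 ht0
      rcases List.mem_append.1 h0 with h0 | h0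
      · -- t0 in the left copy
        obtain ⟨r0, hr0, rfl⟩ := List.mem_map.1 h0
        set SL : Finset (Vt i × Vt i × Vt i) :=
          rest.toFinset.filter (fun t => tmap Sum.inl t ∈ S) with hSLdef
        have hSLsub : SL ⊆ (Ct i).toFinset := by
          intro x hx
          have := Finset.mem_of_mem_filter _ hx
          exact List.mem_toFinset.2 (hC ▸ List.mem_cons_of_mem _ (List.mem_toFinset.1 this))
        have hSLcl : Closed SL := by
          intro t htf u v harc
          obtain ⟨htr, htS'⟩ := Finset.mem_filter.1 htf
          obtain ⟨t', ht'S, harc'⟩ := hcl _ htS' (Sum.inl u) (Sum.inl v) (harcmapl t u v harc)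
          have ht'm : t' ∈ Ct (i+1) := List.mem_toFinset.1 (hS ht'S)
          rw [hC1] at ht'm
          rcases List.mem_append.1 ht'm with h1 | h1
          swap
          · exfalso
            simp only [List.mem_cons, List.not_mem_nil, or_false] at h1
            rcases h1 with h|h|h|h|h|h <;> subst h <;>
              first
              | exact hX1 ht'S | exact hX2 ht'S | exact hX3 ht'S
              | exact hX4 ht'S | exact hX5 ht'S | exact hX6 ht'S
          rcases List.mem_append.1 h1 with h1 | h1
          · obtain ⟨s, hs, rfl⟩ := List.mem_map.1 h1
            exact ⟨s, Finset.mem_filter.2 ⟨List.mem_toFinset.2 hs, ht'S⟩, harcmapl' s v u harc'⟩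
          · exfalso
            obtain ⟨s, hs, rfl⟩ := List.mem_map.1 h1
            rcases harc' with h|h|h <;> simp [tmap, Prod.ext_iff] at h
        have hSLfull := hconn SL hSLsub hSLcl
          ⟨r0, Finset.mem_filter.2 ⟨List.mem_toFinset.2 hr0, ht0⟩⟩
        have : ((a, b, c) : Vt i × Vt i × Vt i) ∈ SL := by
          rw [hSLfull]
          exact List.mem_toFinset.2 (hC ▸ List.mem_cons_self)
        exact hc0rest (List.mem_toFinset.1 (Finset.mem_of_mem_filter _ this))
      · -- t0 in the right copy
        obtain ⟨r0, hr0, rfl⟩ := List.mem_map.1 h0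
        set SR : Finset (Vt i × Vt i × Vt i) :=
          rest.toFinset.filter (fun t => tmap Sum.inr t ∈ S) with hSRdef
        have hSRsub : SR ⊆ (Ct i).toFinset := by
          intro x hx
          have := Finset.mem_of_mem_filter _ hx
          exact List.mem_toFinset.2 (hC ▸ List.mem_cons_of_mem _ (List.mem_toFinset.1 this))
        have hSRcl : Closed SR := by
          intro t htf u v harc
          obtain ⟨htr, htS'⟩ := Finset.mem_filter.1 htf
          obtain ⟨t', ht'S, harc'⟩ := hcl _ htS' (Sum.inr u) (Sum.inr v) (harcmapr t u v harc)
          have ht'm : t' ∈ Ct (i+1) := List.mem_toFinset.1 (hS ht'S)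
          rw [hC1] at ht'm
          rcases List.mem_append.1 ht'm with h1 | h1
          swap
          · exfalso
            simp only [List.mem_cons, List.not_mem_nil, or_false] at h1
            rcases h1 with h|h|h|h|h|h <;> subst h <;>
              first
              | exact hX1 ht'S | exact hX2 ht'S | exact hX3 ht'S
              | exact hX4 ht'S | exact hX5 ht'S | exact hX6 ht'S
          rcases List.mem_append.1 h1 with h1 | h1
          swap
          · obtain ⟨s, hs, rfl⟩ := List.mem_map.1 h1
            exact ⟨s, Finset.mem_filter.2 ⟨List.mem_toFinset.2 hs, ht'S⟩, harcmapr' s v u harc'⟩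
          · exfalso
            obtain ⟨s, hs, rfl⟩ := List.mem_map.1 h1
            rcases harc' with h|h|h <;> simp [tmap, Prod.ext_iff] at h
        have hSRfull := hconn SR hSRsub hSRcl
          ⟨r0, Finset.mem_filter.2 ⟨List.mem_toFinset.2 hr0, ht0⟩⟩
        have : ((a, b, c) : Vt i × Vt i × Vt i) ∈ SR := by
          rw [hSRfull]
          exact List.mem_toFinset.2 (hC ▸ List.mem_cons_self)
        exact hc0rest (List.mem_toFinset.1 (Finset.mem_of_mem_filter _ this))

lemma card_Vt : ∀ i, Fintype.card (Vt i) = 3 * 2 ^ i := by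
  intro i
  induction i with
  | zero =>
    have : Fintype.card (Vt 0) = Fintype.card (Fin 3) := Fintype.card_congr (Equiv.refl _)
    exact this.trans (by simp)
  | succ n ihn =>
    have h1 : Fintype.card (Vt (n+1)) = Fintype.card (Vt n ⊕ Vt n) :=
      Fintype.card_congr (Equiv.refl _)
    rw [h1, Fintype.card_sum, ihn]
    ring

theorem stmt16 (i : ℕ) :
    Fintype.card (Vt i) = 3 * 2 ^ i ∧
    (∀ p : Vt i × Vt i, p ∈ arcList (Ct i) → (p.2, p.1) ∈ arcList (Ct i)) ∧
    (arcList (Ct i)).Nodup ∧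
    (∀ S : Finset (Vt i × Vt i × Vt i),
      S ⊆ (Ct i).toFinset → S.Nonempty → S ≠ (Ct i).toFinset →
      ∃ u v : Vt i, (∃ t ∈ S, arcOf t (u, v)) ∧ ¬ ∃ t ∈ S, arcOf t (v, u)) := by
  obtain ⟨hnd, hsymm, hdist, hconn⟩ := key_s16 i
  refine ⟨card_Vt i, hsymm, hnd, ?_⟩
  intro S hsub hne hneq
  by_contra hcon
  push_neg at hcon
  have hcl : Closed S := by
    intro t htS u v harc
    exact hcon u v ⟨t, htS, harc⟩
  exact hneq (hconn S hsub hcl hne)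
end
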